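/- arXiv:2209.06655 — 3 statements merged into one kernel-verified Lean document; each statement's English description precedes it below -/
import Mathlib

section
/- For every L_MO-formula φ(X₁,…,Xₙ) there exists an L_MO-formula ψ(X₁,…,Xₙ) such that for every tuple Ā = (A₁,…,Aₙ) of finite subsets of 𝕀: WSO(𝕀) ⊨ φ(Ā) if and only if MSO(⌊Ā⌋) ⊨ ψ(Ā), where ⌊Ā⌋ = {0} ∪ A₁ ∪ … ∪ Aₙ is viewed as a finite suborder of 𝕀 and MSO(⌊Ā⌋) is the L_MO-structure on its powerset. -/
namespace MCpaper

open FirstOrder Language Structure Set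

/-- `𝕀`: a dense linear order with a least element `0` and no greatest element,
concretely the nonnegative rationals. -/
abbrev II : Type := NNRat

/-! ### Set-level operations associated to a linear order -/

section SetOps

variable {α : Type*} [LinearOrder α]

/-- The singleton of the least element of `A` (as a set; empty if `A` has no least element). -/
def minSet (A : Set α) : Set α := {i ∈ A | ∀ j ∈ A, i ≤ j}

/-- The singleton of the greatest element of `A` (as a set; empty if `A` has no greatest
element). -/
def maxSet (A : Set α) : Set α := {i ∈ A | ∀ j ∈ A, j ≤ i}

/-- `sInvSet A B = {i ∈ A : i has a successor in the suborder A and that successor lies in B}`. -/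
def sInvSet (A B : Set α) : Set α :=
  {i ∈ A | ∃ j ∈ A, i < j ∧ (∀ k ∈ A, i < k → j ≤ k) ∧ j ∈ B}

lemma minSet_subset (A : Set α) : minSet A ⊆ A := sep_subset _ _

lemma minSet_subsingleton (A : Set α) : (minSet A).Subsingleton :=
  fun x hx y hy => le_antisymm (hx.2 y hy.1) (hy.2 x hx.1)

lemma maxSet_subsingleton (A : Set α) : (maxSet A).Subsingleton :=
  fun x hx y hy => le_antisymm (hy.2 x hx.1) (hx.2 y hy.1)
lemma maxSet_subset (A : Set α) : maxSet A ⊆ A := sep_subset _ _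
lemma sInvSet_subset (A B : Set α) : sInvSet A B ⊆ A := sep_subset _ _

end SetOps

/-! ### The languages -/

/-- Relation symbols of `L_MO = {⊆, ∃<}`. -/
inductive MORel : ℕ → Type
  | sub : MORel 2
  | elt : MORel 2

/-- The language `L_MO = {⊆, ∃<}` with two binary relation symbols. -/
def LMO : Language := ⟨fun _ => Empty, MORel⟩

/-- Function symbols of `L_WSO`. -/
inductive WSOFunc : ℕ → Type
  | union : WSOFunc 2
  | inter : WSOFunc 2
  | bot : WSOFunc 0
  | zero : WSOFunc 0
  | min : WSOFunc 1
  | max : WSOFunc 1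
  | sinv : WSOFunc 2

/-- The language `L_WSO = {∪, ∩, ⊥, 𝟎, min, max, 𝔰⁻¹}`. -/
def LWSO : Language := ⟨WSOFunc, fun _ => Empty⟩

/-- Function symbols of `L_MSOFin`. -/
inductive MSOFinFunc : ℕ → Type
  | union : MSOFinFunc 2
  | inter : MSOFinFunc 2
  | bot : MSOFinFunc 0
  | zero : MSOFinFunc 0
  | zeroStar : MSOFinFunc 0
  | sinv : MSOFinFunc 1

/-- The language `L_MSOFin = {∪, ∩, ⊥, 𝟎, 𝟎*, s⁻¹}`. -/
def LMSOFin : Language := ⟨MSOFinFunc, fun _ => Empty⟩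

/-- Function symbols of `L_L`. -/
inductive LLFunc : ℕ → Type
  | union : LLFunc 2
  | inter : LLFunc 2
  | bot : LLFunc 0
  | zero : LLFunc 0
  | min : LLFunc 1
  | max : LLFunc 1
  | left : LLFunc 1
  | right : LLFunc 1

/-- The language `L_L = {∪, ∩, ⊥, 𝟎, min, max, l, r}`. -/
def LL : Language := ⟨LLFunc, fun _ => Empty⟩

/-! ### `WSO(𝕀)` as an `L_WSO`-structure and as an `L_MO`-structure -/

/-- The universe of `WSO(𝕀)`: finite subsets of `𝕀`. -/
abbrev FinSub : Type := {A : Set II // A.Finite}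

/-- `WSO(𝕀)` as an `L_WSO`-structure. -/
instance finSubLWSO : LWSO.Structure FinSub where
  funMap {n} f :=
    match f with
    | .union => fun v => ⟨(v 0).1 ∪ (v 1).1, (v 0).2.union (v 1).2⟩
    | .inter => fun v => ⟨(v 0).1 ∩ (v 1).1, (v 0).2.inter_of_left _⟩
    | .bot => fun _ => ⟨∅, finite_empty⟩
    | .zero => fun _ => ⟨{0}, finite_singleton _⟩
    | .min => fun v => ⟨minSet (v 0).1, (v 0).2.subset (minSet_subset _)⟩
    | .max => fun v => ⟨maxSet (v 0).1, (v 0).2.subset (maxSet_subset _)⟩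
    | .sinv => fun v => ⟨sInvSet (v 0).1 (v 1).1, (v 0).2.subset (sInvSet_subset _ _)⟩
  RelMap {n} r := Empty.elim r

/-- `WSO(α)` as an `L_MO`-structure, for any linearly ordered `α` (here specialised to `𝕀`). -/
instance finSubLMO : LMO.Structure FinSub where
  funMap {n} f := Empty.elim f
  RelMap {n} r :=
    match r with
    | .sub => fun v => (v 0).1 ⊆ (v 1).1
    | .elt => fun v => ∃ a ∈ (v 0).1, ∃ b ∈ (v 1).1, a < b

/-- `MSO(α)`: the `L_MO`-structure on the full powerset of a linear order `α`. -/
instance powersetLMO (α : Type*) [LinearOrder α] : LMO.Structure (Set α) where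
  funMap {n} f := Empty.elim f
  RelMap {n} r :=
    match r with
    | .sub => fun v => v 0 ⊆ v 1
    | .elt => fun v => ∃ a ∈ v 0, ∃ b ∈ v 1, a < b

/-! ### `MSO(n)` and the pseudofinite theory `T_MSOFin` -/

/-- `MSO(n)` as an `L_MSOFin`-structure on the powerset of `{0, …, n-1}`. -/
instance msoFinStructure (n : ℕ) : LMSOFin.Structure (Set (Fin n)) where
  funMap {m} f :=
    match f with
    | .union => fun v => v 0 ∪ v 1
    | .inter => fun v => v 0 ∩ v 1
    | .bot => fun _ => ∅
    | .zero => fun _ => {i : Fin n | (i : ℕ) = 0}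
    | .zeroStar => fun _ => {i : Fin n | (i : ℕ) = n - 1}
    | .sinv => fun v => {i : Fin n | ∃ j : Fin n, (j : ℕ) = (i : ℕ) + 1 ∧ j ∈ v 0}
  RelMap {m} r := Empty.elim r

/-- The pseudofinite monadic second order theory of linear order: the set of `L_MSOFin`-sentences
true in `MSO(n)` for every `n`. -/
def TMSOFin : LMSOFin.Theory := {φ : LMSOFin.Sentence | ∀ n : ℕ, Set (Fin n) ⊨ φ}

/-! ### Abstract `L_MO`-structures: atoms and interval restrictions -/

section LMOAbstract

variable {M : Type*} [LMO.Structure M]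

/-- The interpretation of `⊆` in an `L_MO`-structure. -/
def mSub (a b : M) : Prop := RelMap (L := LMO) MORel.sub ![a, b]

/-- The interpretation of `∃<` in an `L_MO`-structure. -/
def mLt (a b : M) : Prop := RelMap (L := LMO) MORel.elt ![a, b]

/-- `b` is the least element of the partial order `(M, ⊆)`. -/
def IsBotM (b : M) : Prop := ∀ x : M, mSub b x

/-- `a` is an atom of `(M, ⊆)`: a minimal element strictly above the least element. -/
def IsAtomM (a : M) : Prop :=
  ∃ b : M, IsBotM b ∧ a ≠ b ∧ ∀ x : M, mSub x a → x = a ∨ x = b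

/-- The carrier `{B : M ∣ every atom X ⊆ B satisfies (i ∃< X ∨ X = i) ∧ X ∃< j}`
of the restriction `M ↾ [i,j)`. -/
def intervalRes (i j : M) : Set M :=
  {B : M | ∀ X : M, IsAtomM X → mSub X B → (mLt i X ∨ X = i) ∧ mLt X j}

/-- The `L_MO`-structure induced on a subset of an `L_MO`-structure. -/
def inducedLMO (s : Set M) : LMO.Structure s where
  funMap {n} f := Empty.elim f
  RelMap {n} r v := RelMap (M := M) r fun k => (v k : M)

end LMOAbstract

/-! ### Abstract `L_WSO`-structures, restrictions to elements -/

section LWSOAbstract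

variable {M : Type*} [LWSO.Structure M]

/-- The interpretation of `∪` in an `L_WSO`-structure. -/
def wUnion (a b : M) : M := funMap (L := LWSO) WSOFunc.union ![a, b]

/-- The interpretation of `∩` in an `L_WSO`-structure. -/
def wInter (a b : M) : M := funMap (L := LWSO) WSOFunc.inter ![a, b]

/-- The interpretation of `⊥` in an `L_WSO`-structure. -/
def wBot : M := funMap (L := LWSO) (M := M) WSOFunc.bot ![]

/-- The interpretation of `𝟎` in an `L_WSO`-structure. -/
def wZero : M := funMap (L := LWSO) (M := M) WSOFunc.zero ![]

/-- The interpretation of `min` in an `L_WSO`-structure. -/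
def wMin (a : M) : M := funMap (L := LWSO) WSOFunc.min ![a]

/-- The interpretation of `max` in an `L_WSO`-structure. -/
def wMax (a : M) : M := funMap (L := LWSO) WSOFunc.max ![a]

/-- The interpretation of `𝔰⁻¹` in an `L_WSO`-structure. -/
def wSInv (a b : M) : M := funMap (L := LWSO) WSOFunc.sinv ![a, b]

variable (M)

/-- The universe `{B : M ∣ B ∩ A = B}` of the restriction `M ↾ A`. -/
def Res (A : M) : Type _ := {B : M // wInter B A = B}

/-- The (true in every model of `Th(WSO(𝕀))`) closure conditions saying that
`{B : M ∣ B ∩ A = B}` is closed under the operations of the restricted structure `M ↾ A`. -/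
structure ResClosed (A : M) : Prop where
  union : ∀ B C : M, wInter B A = B → wInter C A = C → wInter (wUnion B C) A = wUnion B C
  inter : ∀ B C : M, wInter B A = B → wInter C A = C → wInter (wInter B C) A = wInter B C
  bot : wInter (wBot : M) A = wBot
  zero : wInter (wMin A) A = wMin A
  zeroStar : wInter (wMax A) A = wMax A
  sinv : ∀ B : M, wInter B A = B → wInter (wSInv A B) A = wSInv A B

variable {M}

/-- The restriction `M ↾ A` as an `L_MSOFin`-structure: `∪`, `∩`, `⊥` are inherited from `M`,
`𝟎` is `min(A)`, `𝟎*` is `max(A)`, and `s⁻¹` is `B ↦ 𝔰⁻¹(A, B)` computed in `M`. -/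
def resStructure {A : M} (hc : ResClosed M A) : LMSOFin.Structure (Res M A) where
  funMap {m} f :=
    match f with
    | .union => fun v => ⟨wUnion (v 0).1 (v 1).1, hc.union _ _ (v 0).2 (v 1).2⟩
    | .inter => fun v => ⟨wInter (v 0).1 (v 1).1, hc.inter _ _ (v 0).2 (v 1).2⟩
    | .bot => fun _ => ⟨wBot, hc.bot⟩
    | .zero => fun _ => ⟨wMin A, hc.zero⟩
    | .zeroStar => fun _ => ⟨wMax A, hc.zeroStar⟩
    | .sinv => fun v => ⟨wSInv A (v 0).1, hc.sinv _ (v 0).2⟩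
  RelMap {m} r := Empty.elim r

/-- `⌊Ā⌋ = 𝟎 ∪ A₁ ∪ … ∪ Aₙ`, computed in `M`. -/
def wFloor {n : ℕ} (A : Fin n → M) : M := (List.ofFn A).foldl wUnion wZero

end LWSOAbstract

/-! ### Complexity classes of formulas -/

section Complexity

variable {L : Language} {α : Type*}

/-- Positive existential formulas: those built from atomic formulas using only `∧`, `∨`
and `∃`. -/
inductive IsPosEx : {n : ℕ} → L.BoundedFormula α n → Prop
  | equal {n} (t₁ t₂ : L.Term (α ⊕ Fin n)) : IsPosEx (BoundedFormula.equal t₁ t₂)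
  | rel {n k} (R : L.Relations k) (ts : Fin k → L.Term (α ⊕ Fin n)) :
      IsPosEx (BoundedFormula.rel R ts)
  | inf {n} {φ ψ : L.BoundedFormula α n} : IsPosEx φ → IsPosEx ψ → IsPosEx (φ ⊓ ψ)
  | sup {n} {φ ψ : L.BoundedFormula α n} : IsPosEx φ → IsPosEx ψ → IsPosEx (φ ⊔ ψ)
  | ex {n} {φ : L.BoundedFormula α (n + 1)} : IsPosEx φ → IsPosEx φ.ex

/-- Existential formulas: a block of existential quantifiers applied to a
quantifier-free formula. -/
inductive IsExist : {n : ℕ} → L.BoundedFormula α n → Prop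
  | of_isQF {n} {φ : L.BoundedFormula α n} : φ.IsQF → IsExist φ
  | ex {n} {φ : L.BoundedFormula α (n + 1)} : IsExist φ → IsExist φ.ex

end Complexity

/-! ### Finite unions of closed intervals and the structure `L(𝕀)` -/

/-- `A` is a finite union of closed intervals of `𝕀` (each of the form `[i,j]` or `[i,∞)`;
intervals of the form `(-∞, j]` coincide with `[0, j]` since `𝕀` has least element `0`). -/
def IsFCI (A : Set II) : Prop :=
  ∃ (k : ℕ) (f : Fin k → Set II),
    (∀ m : Fin k, (∃ i j : II, f m = Set.Icc i j) ∨ ∃ i : II, f m = Set.Ici i) ∧ A = ⋃ m, f m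

/-- The universe of `L(𝕀)`: finite unions of closed intervals of `𝕀`. -/
abbrev FCI : Type := {A : Set II // IsFCI A}

/-- The set of left endpoints of `A`. -/
def lSet (A : Set II) : Set II := {i ∈ A | i = 0 ∨ ∃ i' < i, Set.Ioo i' i ∩ A = ∅}

/-- The set of right endpoints of `A`. -/
def rSet (A : Set II) : Set II := {i ∈ A | ∃ i'', i < i'' ∧ Set.Ioo i i'' ∩ A = ∅}

lemma isFCI_empty : IsFCI (∅ : Set II) := ⟨0, Fin.elim0, fun m => m.elim0, by simp⟩

lemma isFCI_singleton (i : II) : IsFCI {i} :=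
  ⟨1, fun _ => Set.Icc i i, fun _ => Or.inl ⟨i, i, rfl⟩, by simp⟩

lemma IsFCI.union {A B : Set II} (hA : IsFCI A) (hB : IsFCI B) : IsFCI (A ∪ B) := by
  obtain ⟨k, f, hf, rfl⟩ := hA
  obtain ⟨l, g, hg, rfl⟩ := hB
  refine ⟨k + l, fun m => Sum.elim f g (finSumFinEquiv.symm m), fun m => ?_, ?_⟩
  · dsimp only
    rcases finSumFinEquiv.symm m with i | j
    · exact hf i
    · exact hg j
  · ext x
    simp only [Set.mem_union, Set.mem_iUnion]
    constructor
    · rintro (⟨i, hi⟩ | ⟨j, hj⟩)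
      · exact ⟨finSumFinEquiv (Sum.inl i), by simpa using hi⟩
      · exact ⟨finSumFinEquiv (Sum.inr j), by simpa using hj⟩
    · rintro ⟨m, hm⟩
      rcases h : finSumFinEquiv.symm m with i | j
      · rw [h] at hm; exact Or.inl ⟨i, hm⟩
      · rw [h] at hm; exact Or.inr ⟨j, hm⟩

lemma Icc_inter_Ici' {a b c : II} : Set.Icc a b ∩ Set.Ici c = Set.Icc (a ⊔ c) b := by
  ext x
  simp only [Set.mem_inter_iff, Set.mem_Icc, Set.mem_Ici, sup_le_iff]
  tauto

lemma IsFCI.inter {A B : Set II} (hA : IsFCI A) (hB : IsFCI B) : IsFCI (A ∩ B) := by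
  obtain ⟨k, f, hf, rfl⟩ := hA
  obtain ⟨l, g, hg, rfl⟩ := hB
  refine ⟨k * l, fun m => f (finProdFinEquiv.symm m).1 ∩ g (finProdFinEquiv.symm m).2,
    fun m => ?_, ?_⟩
  · dsimp only
    rcases hf (finProdFinEquiv.symm m).1 with ⟨a, b, hab⟩ | ⟨a, ha⟩ <;>
      rcases hg (finProdFinEquiv.symm m).2 with ⟨c, d, hcd⟩ | ⟨c, hc⟩
    · exact Or.inl ⟨a ⊔ c, b ⊓ d, by rw [hab, hcd, Set.Icc_inter_Icc]⟩
    · exact Or.inl ⟨a ⊔ c, b, by rw [hab, hc, Icc_inter_Ici']⟩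
    · exact Or.inl ⟨c ⊔ a, d, by rw [ha, hcd, Set.inter_comm, Icc_inter_Ici']⟩
    · exact Or.inr ⟨a ⊔ c, by rw [ha, hc, Set.Ici_inter_Ici]⟩
  · ext x
    simp only [Set.mem_inter_iff, Set.mem_iUnion]
    constructor
    · rintro ⟨⟨i, hi⟩, ⟨j, hj⟩⟩
      exact ⟨finProdFinEquiv (i, j), by simpa using ⟨hi, hj⟩⟩
    · rintro ⟨m, hm⟩
      exact ⟨⟨_, hm.1⟩, ⟨_, hm.2⟩⟩

lemma isFCI_minSet (A : Set II) : IsFCI (minSet A) := by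
  rcases (minSet_subsingleton A).eq_empty_or_singleton with h | ⟨i, h⟩
  · rw [h]; exact isFCI_empty
  · rw [h]; exact isFCI_singleton i

lemma isFCI_maxSet (A : Set II) : IsFCI (maxSet A) := by
  rcases (maxSet_subsingleton A).eq_empty_or_singleton with h | ⟨i, h⟩
  · rw [h]; exact isFCI_empty
  · rw [h]; exact isFCI_singleton i

lemma finite_isFCI {A : Set II} (hA : A.Finite) : IsFCI A :=
  Set.Finite.induction_on (motive := fun s _ => IsFCI s) A hA isFCI_empty
    (fun _ _ ih => by rw [Set.insert_eq]; exact (isFCI_singleton _).union ih)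

lemma IsFCI.lSet_finite {A : Set II} (hA : IsFCI A) : (lSet A).Finite := by
  obtain ⟨k, f, hf, rfl⟩ := hA
  have hsub : lSet (⋃ m, f m) ⊆ {0} ∪ ⋃ m, minSet (f m) := by
    rintro i ⟨hiA, hi⟩
    rcases hi with rfl | ⟨i', hi'lt, hgap⟩
    · exact Set.mem_union_left _ rfl
    · obtain ⟨m, him⟩ := Set.mem_iUnion.1 hiA
      refine Set.mem_union_right _ (Set.mem_iUnion.2 ⟨m, him, fun j hj => ?_⟩)
      by_contra hji
      push_neg at hji
      obtain ⟨x, hx1, hx2⟩ := exists_between (max_lt hi'lt hji : max i' j < i)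
      have hxfm : x ∈ f m := by
        rcases hf m with ⟨a, b, hab⟩ | ⟨a, ha⟩
        · rw [hab] at him hj ⊢
          exact ⟨hj.1.trans ((le_max_right i' j).trans hx1.le), hx2.le.trans him.2⟩
        · rw [ha] at hj ⊢
          exact hj.trans ((le_max_right i' j).trans hx1.le)
      have hmem : x ∈ Set.Ioo i' i ∩ ⋃ m, f m :=
        ⟨⟨(le_max_left i' j).trans_lt hx1, hx2⟩, Set.mem_iUnion.2 ⟨m, hxfm⟩⟩
      rw [hgap] at hmem
      exact hmem
  exact ((Set.finite_singleton 0).union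
    (Set.finite_iUnion fun m => (minSet_subsingleton (f m)).finite)).subset hsub

lemma IsFCI.rSet_finite {A : Set II} (hA : IsFCI A) : (rSet A).Finite := by
  obtain ⟨k, f, hf, rfl⟩ := hA
  have hsub : rSet (⋃ m, f m) ⊆ ⋃ m, maxSet (f m) := by
    rintro i ⟨hiA, i'', hi''gt, hgap⟩
    obtain ⟨m, him⟩ := Set.mem_iUnion.1 hiA
    refine Set.mem_iUnion.2 ⟨m, him, fun j hj => ?_⟩
    by_contra hij
    push_neg at hij
    obtain ⟨x, hx1, hx2⟩ := exists_between (lt_min hi''gt hij : i < min i'' j)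
    have hxfm : x ∈ f m := by
      rcases hf m with ⟨a, b, hab⟩ | ⟨a, ha⟩
      · rw [hab] at him hj ⊢
        exact ⟨him.1.trans hx1.le, (hx2.le.trans (min_le_right i'' j)).trans hj.2⟩
      · rw [ha] at him ⊢
        exact him.trans hx1.le
    have hmem : x ∈ Set.Ioo i i'' ∩ ⋃ m, f m :=
      ⟨⟨hx1, hx2.trans_le (min_le_left i'' j)⟩, Set.mem_iUnion.2 ⟨m, hxfm⟩⟩
    rw [hgap] at hmem
    exact hmem
  exact (Set.finite_iUnion fun m => (maxSet_subsingleton (f m)).finite).subset hsub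

/-- `L(𝕀)` as an `L_L`-structure. -/
instance fciLL : LL.Structure FCI where
  funMap {m} f :=
    match f with
    | .union => fun v => ⟨(v 0).1 ∪ (v 1).1, (v 0).2.union (v 1).2⟩
    | .inter => fun v => ⟨(v 0).1 ∩ (v 1).1, (v 0).2.inter (v 1).2⟩
    | .bot => fun _ => ⟨∅, isFCI_empty⟩
    | .zero => fun _ => ⟨{0}, isFCI_singleton 0⟩
    | .min => fun v => ⟨minSet (v 0).1, isFCI_minSet _⟩
    | .max => fun v => ⟨maxSet (v 0).1, isFCI_maxSet _⟩
    | .left => fun v => ⟨lSet (v 0).1, finite_isFCI (v 0).2.lSet_finite⟩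
    | .right => fun v => ⟨rSet (v 0).1, finite_isFCI (v 0).2.rSet_finite⟩
  RelMap {m} r := Empty.elim r

universe u v

/-- `⌊Ā⌋ = {0} ∪ A₁ ∪ … ∪ Aₙ`, as a subset of `𝕀`. -/
def floorSet {n : ℕ} (A : Fin n → FinSub) : Set II := {0} ∪ ⋃ i, (A i).1


/-! ### Gap machinery -/

noncomputable section FV

open Classical

/-- The open "gap" of `F` to the right of `g`. -/
def gapSet (F : Set II) (g : II) : Set II := {x | g < x ∧ ∀ f ∈ F, g < f → x < f}

lemma gapSet_not_mem_F {F : Set II} {g x : II} (hg : x ∈ gapSet F g) (hx : x ∈ F) : False :=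
  lt_irrefl x (hg.2 x hx hg.1)

lemma gapSet_disjoint {F : Set II} {g h : II} (hgF : g ∈ F) (hhF : h ∈ F) (hne : g ≠ h) :
    gapSet F g ∩ gapSet F h = ∅ := by
  rcases hne.lt_or_gt with hlt | hlt
  · ext x
    simp only [Set.mem_inter_iff, Set.mem_empty_iff_false, iff_false, not_and]
    rintro ⟨hx1, hx2⟩ ⟨hy1, hy2⟩
    exact absurd (hx2 h hhF hlt) (not_lt.2 hy1.le)
  · ext x
    simp only [Set.mem_inter_iff, Set.mem_empty_iff_false, iff_false, not_and]
    rintro ⟨hx1, hx2⟩ ⟨hy1, hy2⟩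
    exact absurd (hy2 g hgF hlt) (not_lt.2 hx1.le)

lemma gapSet_cover {F : Set II} (hF : F.Finite) (h0 : (0 : II) ∈ F) (x : II) (hx : x ∉ F) :
    ∃ g ∈ F, x ∈ gapSet F g := by
  have h0x : (0 : II) < x := by
    rcases eq_or_lt_of_le (zero_le : (0 : II) ≤ x) with h | h
    · exact absurd (h ▸ h0) hx
    · exact h
  have hGfin : ({f ∈ F | f < x}).Finite := hF.subset (Set.sep_subset _ _)
  have hGne : ({f ∈ F | f < x}).Nonempty := ⟨0, h0, h0x⟩
  obtain ⟨g, hg, hgmax⟩ : ∃ a ∈ {f ∈ F | f < x}, ∀ a' ∈ {f ∈ F | f < x}, id a ≤ id a' → id a = id a' := by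
    obtain ⟨g, hg, hm⟩ := hGfin.exists_maximalFor id _ hGne
    exact ⟨g, hg, fun a' ha' h => le_antisymm h (hm ha' h)⟩
  refine ⟨g, hg.1, hg.2, fun f hf hgf => ?_⟩
  by_contra hfx
  push_neg at hfx
  rcases eq_or_lt_of_le hfx with h | h
  · exact hx (h ▸ hf)
  · exact absurd (hgmax f ⟨hf, h⟩ hgf.le) hgf.ne

lemma lt_of_mem_gapSet_of_F {F : Set II} {g x f : II} (hx : x ∈ gapSet F g) (hf : f ∈ F)
    (hgf : g < f) : x < f := hx.2 f hf hgf

/-! ### Colors: finite abstractions of Ehrenfeucht–Fraïssé types -/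

/-- Quantifier-free pattern of a tuple of sets. -/
def Pat (ι : Type) : Type := (ι → ι → Prop) × (ι → ι → Prop) × (ι → Prop)

instance patFinite (ι : Type) [Finite ι] : Finite (Pat ι) := by
  unfold Pat; infer_instance

instance optionFinite (ι : Type*) [Finite ι] : Finite (Option ι) :=
  Finite.of_equiv _ (Equiv.optionEquivSumPUnit.{0} ι).symm

/-- Rank-`r` colors for `ι`-indexed tuples. -/
def Color : ℕ → Type → Type
  | 0, ι => Pat ι
  | (r+1), ι => Pat ι × Set (Color r (Option ι))

instance colorFinite : ∀ (r : ℕ) (ι : Type) [Finite ι], Finite (Color r ι)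
  | 0, ι, h => inferInstanceAs (Finite (Pat ι))
  | (r+1), ι, h =>
    haveI : Finite ι := h
    haveI := colorFinite r (Option ι)
    inferInstanceAs (Finite (Pat ι × Set (Color r (Option ι))))

/-- The pattern of a tuple of sets in a linear order. -/
def patOf {γ : Type} [LinearOrder γ] {ι : Type} (b : ι → Set γ) : Pat ι :=
  ⟨fun i j => b i ⊆ b j, fun i j => ∃ a ∈ b i, ∃ c ∈ b j, a < c, fun i => b i = ∅⟩

/-- Extension of a tuple by one further set, indexed by `none`. -/
def optExt {γ ι : Type} (b : ι → Set γ) (D : Set γ) : Option ι → Set γ :=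
  fun o => o.elim D b

/-- The rank-`r` color of a tuple of (finite) subsets of a linear order. -/
def colorOf : (r : ℕ) → (γ : Type) → [inst : LinearOrder γ] → {ι : Type} →
    (ι → Set γ) → Color r ι
  | 0, _, _, _, b => patOf b
  | (r+1), γ, _, _, b =>
    ⟨patOf b, {c | ∃ D : Set γ, D.Finite ∧ colorOf r γ (optExt b D) = c}⟩

/-- Pattern component of a color. -/
def Color.pat : ∀ {r : ℕ} {ι : Type}, Color r ι → Pat ι
  | 0, _, c => c
  | (_+1), _, c => c.1

lemma colorOf_pat (r : ℕ) (γ : Type) [LinearOrder γ] {ι : Type} (b : ι → Set γ) :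
    (colorOf r γ b).pat = patOf b := by
  cases r <;> rfl

/-- Reindexing of patterns along an equivalence. -/
def Pat.map {ι κ : Type} (e : ι ≃ κ) (p : Pat ι) : Pat κ :=
  ⟨fun i j => p.1 (e.symm i) (e.symm j), fun i j => p.2.1 (e.symm i) (e.symm j),
    fun i => p.2.2 (e.symm i)⟩

/-- Reindexing of colors along an equivalence. -/
def Color.map : ∀ {r : ℕ} {ι κ : Type}, (ι ≃ κ) → Color r ι → Color r κ
  | 0, _, _, e, p => Pat.map e p
  | (r+1), _, _, e, c => ⟨Pat.map e c.1, Color.map (Equiv.optionCongr e) '' c.2⟩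

lemma patOf_map {γ : Type} [LinearOrder γ] {ι κ : Type} (e : ι ≃ κ) (b : ι → Set γ) :
    patOf (b ∘ e.symm) = Pat.map e (patOf b) := rfl

lemma colorOf_map (r : ℕ) (γ : Type) [LinearOrder γ] {ι κ : Type} (e : ι ≃ κ)
    (b : ι → Set γ) : colorOf r γ (b ∘ e.symm) = Color.map e (colorOf r γ b) := by
  induction r generalizing ι κ with
  | zero => rfl
  | succ r ih =>
    refine Prod.ext (patOf_map e b) ?_
    show {c | ∃ D : Set γ, D.Finite ∧ colorOf r γ (optExt (b ∘ e.symm) D) = c}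
      = Color.map (Equiv.optionCongr e) '' {c | ∃ D : Set γ, D.Finite ∧
          colorOf r γ (optExt b D) = c}
    have key : ∀ D : Set γ, optExt (b ∘ e.symm) D = (optExt b D) ∘ (Equiv.optionCongr e).symm := by
      intro D
      funext o
      cases o with
      | none => rfl
      | some i => rfl
    ext c
    constructor
    · rintro ⟨D, hD, rfl⟩
      exact ⟨colorOf r γ (optExt b D), ⟨D, hD, rfl⟩, by rw [key, ih]⟩
    · rintro ⟨c', ⟨D, hD, rfl⟩, rfl⟩
      exact ⟨D, hD, by rw [key, ih]⟩

/-- Invariance of colors under order isomorphisms. -/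
lemma colorOf_iso (r : ℕ) {γ δ : Type} [LinearOrder γ] [LinearOrder δ] (e : γ ≃o δ)
    {ι : Type} (b : ι → Set γ) :
    colorOf r δ (fun i => e '' b i) = colorOf r γ b := by
  induction r generalizing ι with
  | zero =>
    show patOf _ = patOf _
    unfold patOf
    refine Prod.ext ?_ (Prod.ext ?_ ?_)
    · funext i j
      exact propext (Set.image_subset_image_iff e.injective)
    · funext i j
      refine propext ⟨?_, ?_⟩
      · rintro ⟨a, ⟨a', ha', rfl⟩, c, ⟨c', hc', rfl⟩, hlt⟩
        exact ⟨a', ha', c', hc', by simpa using hlt⟩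
      · rintro ⟨a, ha, c, hc, hlt⟩
        exact ⟨e a, ⟨a, ha, rfl⟩, e c, ⟨c, hc, rfl⟩, by simpa using hlt⟩
    · funext i
      exact propext (by simp)
  | succ r ih =>
    refine Prod.ext ?_ ?_
    · show patOf _ = patOf _
      unfold patOf
      refine Prod.ext ?_ (Prod.ext ?_ ?_)
      · funext i j
        exact propext (Set.image_subset_image_iff e.injective)
      · funext i j
        refine propext ⟨?_, ?_⟩
        · rintro ⟨a, ⟨a', ha', rfl⟩, c, ⟨c', hc', rfl⟩, hlt⟩
          exact ⟨a', ha', c', hc', by simpa using hlt⟩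
        · rintro ⟨a, ha, c, hc, hlt⟩
          exact ⟨e a, ⟨a, ha, rfl⟩, e c, ⟨c, hc, rfl⟩, by simpa using hlt⟩
      · funext i
        exact propext (by simp)
    · show {c | ∃ D : Set δ, D.Finite ∧ colorOf r δ (optExt (fun i => e '' b i) D) = c}
        = {c | ∃ D : Set γ, D.Finite ∧ colorOf r γ (optExt b D) = c}
      have key : ∀ D : Set γ, optExt (fun i => e '' b i) (e '' D)
          = fun o => e '' (optExt b D o) := by
        intro D
        funext o
        cases o with
        | none => rfl
        | some i => rfl
      ext c
      constructor
      · rintro ⟨D, hD, rfl⟩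
        refine ⟨e.symm '' D, hD.image _, ?_⟩
        have hDD : e '' (⇑e.symm '' D) = D := by
          rw [← Set.image_comp]
          simp
        rw [← ih (optExt b (e.symm '' D))]
        congr 1
        have hk := key (e.symm '' D)
        rw [hDD] at hk
        exact hk.symm
      · rintro ⟨D, hD, rfl⟩
        exact ⟨e '' D, hD.image _, by rw [key, ih]⟩



/-! ### Formula toolkit -/

section Toolkit

variable {α : Type} {γ : Type} [LinearOrder γ]

lemma relMap_sub_pow (v : Fin 2 → Set γ) :
    RelMap (L := LMO) (M := Set γ) MORel.sub v ↔ v 0 ⊆ v 1 := Iff.rfl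

lemma relMap_elt_pow (v : Fin 2 → Set γ) :
    RelMap (L := LMO) (M := Set γ) MORel.elt v ↔ ∃ a ∈ v 0, ∃ b ∈ v 1, a < b := Iff.rfl

lemma relMap_sub_fin (v : Fin 2 → FinSub) :
    RelMap (L := LMO) (M := FinSub) MORel.sub v ↔ (v 0).1 ⊆ (v 1).1 := Iff.rfl

lemma relMap_elt_fin (v : Fin 2 → FinSub) :
    RelMap (L := LMO) (M := FinSub) MORel.elt v ↔ ∃ a ∈ (v 0).1, ∃ b ∈ (v 1).1, a < b := Iff.rfl

/-- `x ⊆ y` as a formula. -/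
def sub2 (x y : α) : LMO.Formula α := Relations.formula₂ (L := LMO) MORel.sub (Term.var x) (Term.var y)

/-- `x ∃< y` as a formula. -/
def elt2 (x y : α) : LMO.Formula α := Relations.formula₂ (L := LMO) MORel.elt (Term.var x) (Term.var y)

/-- `x = y` as a formula. -/
def eq2 (x y : α) : LMO.Formula α := Term.equal (Term.var x) (Term.var y)

@[simp] lemma realize_sub2 {x y : α} {v : α → Set γ} :
    (sub2 x y).Realize v ↔ v x ⊆ v y := by
  rw [sub2]
  exact Formula.realize_rel₂.trans ((relMap_sub_pow _).trans (by simp))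

@[simp] lemma realize_elt2 {x y : α} {v : α → Set γ} :
    (elt2 x y).Realize v ↔ ∃ a ∈ v x, ∃ b ∈ v y, a < b := by
  rw [elt2]
  exact Formula.realize_rel₂.trans ((relMap_elt_pow _).trans (by simp))

@[simp] lemma realize_eq2 {x y : α} {v : α → Set γ} :
    (eq2 x y).Realize v ↔ v x = v y := by
  rw [eq2, Formula.realize_equal]
  simp

/-- Finite conjunction of a list of formulas. -/
def andL (l : List (LMO.Formula α)) : LMO.Formula α := l.foldr (· ⊓ ·) ⊤

@[simp] lemma realize_andL {l : List (LMO.Formula α)} {M : Type} [LMO.Structure M] {v : α → M} :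
    (andL l).Realize v ↔ ∀ φ ∈ l, φ.Realize v := by
  induction l with
  | nil => simp [andL, Formula.Realize]
  | cons φ l ih =>
    rw [andL, List.foldr_cons]
    show (φ ⊓ _).Realize v ↔ _
    rw [Formula.realize_inf]
    rw [andL] at ih
    rw [ih]
    simp

/-- Finite disjunction of a list of formulas. -/
def orL (l : List (LMO.Formula α)) : LMO.Formula α := l.foldr (· ⊔ ·) ⊥

@[simp] lemma realize_orL {l : List (LMO.Formula α)} {M : Type} [LMO.Structure M] {v : α → M} :
    (orL l).Realize v ↔ ∃ φ ∈ l, φ.Realize v := by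
  induction l with
  | nil => simp [orL, Formula.Realize]
  | cons φ l ih =>
    rw [orL, List.foldr_cons]
    show (φ ⊔ _).Realize v ↔ _
    rw [Formula.realize_sup]
    rw [orL] at ih
    rw [ih]
    simp

/-- Conjunction over a finite type. -/
def conjK {κ : Type} [Finite κ] (f : κ → LMO.Formula α) : LMO.Formula α :=
  haveI := Fintype.ofFinite κ
  andL ((Finset.univ : Finset κ).toList.map f)

@[simp] lemma realize_conjK {κ : Type} [Finite κ] {f : κ → LMO.Formula α} {M : Type}
    [LMO.Structure M] {v : α → M} : (conjK f).Realize v ↔ ∀ c : κ, (f c).Realize v := by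
  rw [conjK, realize_andL]
  constructor
  · intro h c
    exact h _ (List.mem_map_of_mem (f := f) (by simp [Finset.mem_toList]))
  · rintro h φ hφ
    obtain ⟨c, _, rfl⟩ := List.mem_map.1 hφ
    exact h c

/-- Disjunction over a finite type. -/
def disjK {κ : Type} [Finite κ] (f : κ → LMO.Formula α) : LMO.Formula α :=
  haveI := Fintype.ofFinite κ
  orL ((Finset.univ : Finset κ).toList.map f)

@[simp] lemma realize_disjK {κ : Type} [Finite κ] {f : κ → LMO.Formula α} {M : Type}
    [LMO.Structure M] {v : α → M} : (disjK f).Realize v ↔ ∃ c : κ, (f c).Realize v := by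
  rw [disjK, realize_orL]
  constructor
  · rintro ⟨φ, hφ, h⟩
    obtain ⟨c, _, rfl⟩ := List.mem_map.1 hφ
    exact ⟨c, h⟩
  · rintro ⟨c, h⟩
    exact ⟨f c, List.mem_map_of_mem (f := f) (by simp [Finset.mem_toList]), h⟩

/-- `x = ∅` as a formula. -/
def emptyV (x : α) : LMO.Formula α :=
  Formula.iAlls Unit (sub2 (Sum.inl x) (Sum.inr ()))

@[simp] lemma realize_emptyV {x : α} {v : α → Set γ} :
    (emptyV x).Realize v ↔ v x = ∅ := by
  rw [emptyV, Formula.realize_iAlls]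
  constructor
  · intro h
    have := h (fun _ => ∅)
    simp only [realize_sub2, id_eq, Sum.elim_inl, Sum.elim_inr] at this
    simpa using this
  · intro h i
    simp only [realize_sub2, id_eq, Sum.elim_inl, Sum.elim_inr]
    simp [h]

/-- `x = univ` as a formula. -/
def univV (x : α) : LMO.Formula α :=
  Formula.iAlls Unit (sub2 (Sum.inr ()) (Sum.inl x))

@[simp] lemma realize_univV {x : α} {v : α → Set γ} :
    (univV x).Realize v ↔ v x = Set.univ := by
  rw [univV, Formula.realize_iAlls]
  constructor
  · intro h
    have := h (fun _ => Set.univ)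
    simp only [realize_sub2, id_eq, Sum.elim_inl, Sum.elim_inr] at this
    simpa [Set.univ_subset_iff] using this
  · intro h i
    simp only [realize_sub2, id_eq, Sum.elim_inl, Sum.elim_inr]
    simp [h]

/-- `x is an atom (singleton)` as a formula. -/
def atomV (x : α) : LMO.Formula α :=
  (∼(emptyV x)) ⊓ Formula.iAlls Unit
    ((sub2 (Sum.inr ()) (Sum.inl x)).imp
      ((eq2 (Sum.inr ()) (Sum.inl x)) ⊔ emptyV (Sum.inr ())))

@[simp] lemma realize_atomV {x : α} {v : α → Set γ} :
    (atomV x).Realize v ↔ ∃ a : γ, v x = {a} := by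
  rw [atomV, Formula.realize_inf, Formula.realize_not, realize_emptyV, Formula.realize_iAlls]
  constructor
  · rintro ⟨hne, h⟩
    obtain ⟨a, ha⟩ := Set.nonempty_iff_ne_empty.2 hne
    refine ⟨a, ?_⟩
    have h2 := h (fun _ => {a})
    simp only [Formula.realize_imp, realize_sub2, Formula.realize_sup, realize_eq2,
      realize_emptyV, id_eq, Sum.elim_inl, Sum.elim_inr] at h2
    rcases h2 (Set.singleton_subset_iff.2 ha) with h3 | h3
    · exact h3.symm
    · exact absurd h3 (Set.singleton_ne_empty a)
  · rintro ⟨a, hxa⟩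
    refine ⟨hxa ▸ Set.singleton_ne_empty a, fun i => ?_⟩
    simp only [Formula.realize_imp, realize_sub2, Formula.realize_sup, realize_eq2,
      realize_emptyV, id_eq, Sum.elim_inl, Sum.elim_inr, hxa]
    intro hsub
    rcases Set.subset_singleton_iff_eq.1 hsub with h | h
    · exact Or.inr h
    · exact Or.inl h

end Toolkit

/-! ### Semantic bridges between `WSO(𝕀)` and `MSO(F)` with gap colors -/

section Bridge

variable (F : Set II)

/-- Trace of a finite set on `F`. -/
def trc (B : FinSub) : Set ↥F := {x | (x : II) ∈ B.1}

/-- The gap suborder at `g`. -/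
abbrev gapT (g : ↥F) : Type := ↥(gapSet F ↑g)

/-- Restriction of a set to a gap, as a set of the gap suborder. -/
def gapPre (g : ↥F) (B : Set II) : Set (gapT F g) := {x | (x : II) ∈ B}

/-- The color of a tuple at a gap. -/
def gcol (r : ℕ) {ι : Type} (b : ι → FinSub) (g : ↥F) : Color r ι :=
  colorOf r (gapT F g) (fun i => gapPre F g (b i).1)

/-- The set of gaps with a given color. -/
def colSet (r : ℕ) {ι : Type} (b : ι → FinSub) (c : Color r ι) : Set ↥F :=
  {g | gcol F r b g = c}

lemma gcol_pat (r : ℕ) {ι : Type} (b : ι → FinSub) (g : ↥F) :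
    (gcol F r b g).pat = patOf (fun i => gapPre F g (b i).1) := by
  rw [gcol, colorOf_pat]

variable {F}

lemma mem_of_gapPre {g : ↥F} {B : Set II} {x : gapT F g} (h : x ∈ gapPre F g B) :
    (x : II) ∈ B := h

lemma gapPre_nonempty_iff {g : ↥F} {B : Set II} :
    (gapPre F g B).Nonempty ↔ (B ∩ gapSet F ↑g).Nonempty := by
  constructor
  · rintro ⟨x, hx⟩
    exact ⟨x, hx, x.2⟩
  · rintro ⟨x, hx1, hx2⟩
    exact ⟨⟨x, hx2⟩, hx1⟩

variable (hF : F.Finite) (h0 : (0 : II) ∈ F)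
include hF h0

lemma subset_decomp {B C : Set II} :
    B ⊆ C ↔ ({x : ↥F | (x : II) ∈ B} ⊆ {x : ↥F | (x : II) ∈ C}) ∧
      ∀ g : ↥F, gapPre F g B ⊆ gapPre F g C := by
  constructor
  · intro h
    exact ⟨fun x hx => h hx, fun g x hx => h hx⟩
  · rintro ⟨h1, h2⟩ x hx
    by_cases hxF : x ∈ F
    · exact h1 (show ((⟨x, hxF⟩ : ↥F) : II) ∈ B from hx)
    · obtain ⟨g, hg, hgap⟩ := gapSet_cover hF h0 x hxF
      exact h2 ⟨g, hg⟩ (show ((⟨x, hgap⟩ : gapT F ⟨g, hg⟩) : II) ∈ B from hx)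

lemma eq_decomp {B C : Set II} :
    B = C ↔ ({x : ↥F | (x : II) ∈ B} = {x : ↥F | (x : II) ∈ C}) ∧
      ∀ g : ↥F, gapPre F g B = gapPre F g C := by
  constructor
  · rintro rfl
    exact ⟨rfl, fun _ => rfl⟩
  · rintro ⟨h1, h2⟩
    apply Set.Subset.antisymm
    · exact (subset_decomp hF h0).2 ⟨h1.le, fun g => (h2 g).le⟩
    · exact (subset_decomp hF h0).2 ⟨h1.ge, fun g => (h2 g).ge⟩

lemma elt_decomp {B C : Set II} :
    (∃ a ∈ B, ∃ b ∈ C, a < b) ↔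
      (∃ p : ↥F, (p : II) ∈ B ∧ ∃ q : ↥F, (q : II) ∈ C ∧ p < q)
      ∨ (∃ p : ↥F, (p : II) ∈ B ∧ ∃ g : ↥F, p ≤ g ∧ (gapPre F g C).Nonempty)
      ∨ (∃ g : ↥F, (gapPre F g B).Nonempty ∧ ∃ q : ↥F, (q : II) ∈ C ∧ g < q)
      ∨ (∃ g h : ↥F, g < h ∧ (gapPre F g B).Nonempty ∧ (gapPre F h C).Nonempty)
      ∨ (∃ g : ↥F, ∃ a ∈ gapPre F g B, ∃ b ∈ gapPre F g C, a < b) := by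
  constructor
  · rintro ⟨a, haB, b, hbC, hab⟩
    by_cases haF : a ∈ F <;> by_cases hbF : b ∈ F
    · exact Or.inl ⟨⟨a, haF⟩, haB, ⟨b, hbF⟩, hbC, by exact_mod_cast hab⟩
    · obtain ⟨h, hh, hbgap⟩ := gapSet_cover hF h0 b hbF
      refine Or.inr (Or.inl ⟨⟨a, haF⟩, haB, ⟨h, hh⟩, ?_, ⟨⟨b, hbgap⟩, hbC⟩⟩)
      show a ≤ h
      by_contra hha
      push_neg at hha
      exact absurd (lt_of_mem_gapSet_of_F hbgap haF hha) (not_lt.2 hab.le)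
    · obtain ⟨g, hg, hagap⟩ := gapSet_cover hF h0 a haF
      refine Or.inr (Or.inr (Or.inl ⟨⟨g, hg⟩, ⟨⟨a, hagap⟩, haB⟩, ⟨b, hbF⟩, hbC, ?_⟩))
      show g < b
      exact hagap.1.trans hab
    · obtain ⟨g, hg, hagap⟩ := gapSet_cover hF h0 a haF
      obtain ⟨h, hh, hbgap⟩ := gapSet_cover hF h0 b hbF
      rcases lt_trichotomy g h with hgh | hgh | hgh
      · exact Or.inr (Or.inr (Or.inr (Or.inl
          ⟨⟨g, hg⟩, ⟨h, hh⟩, by exact_mod_cast hgh, ⟨⟨a, hagap⟩, haB⟩, ⟨⟨b, hbgap⟩, hbC⟩⟩)))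
      · subst hgh
        refine Or.inr (Or.inr (Or.inr (Or.inr
          ⟨⟨g, hg⟩, ⟨a, hagap⟩, haB, ⟨b, hbgap⟩, hbC, ?_⟩)))
        exact_mod_cast hab
      · exact absurd ((lt_of_mem_gapSet_of_F hbgap hg hgh).trans hagap.1)
          (not_lt.2 hab.le)
  · rintro (⟨p, hp, q, hq, hpq⟩ | ⟨p, hp, g, hpg, ⟨c, hc⟩⟩ | ⟨g, ⟨a, ha⟩, q, hq, hgq⟩ |
      ⟨g, h, hgh, ⟨a, ha⟩, ⟨b, hb⟩⟩ | ⟨g, a, ha, b, hb, hab⟩)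
    · exact ⟨p, hp, q, hq, by exact_mod_cast hpq⟩
    · refine ⟨p, hp, c, mem_of_gapPre hc, ?_⟩
      have h1 : (g : II) < (c : II) := c.2.1
      have h2 : (p : II) ≤ (g : II) := by exact_mod_cast hpg
      exact h2.trans_lt h1
    · refine ⟨a, mem_of_gapPre ha, q, hq, ?_⟩
      exact lt_of_mem_gapSet_of_F a.2 q.2 (by exact_mod_cast hgq)
    · refine ⟨a, mem_of_gapPre ha, b, mem_of_gapPre hb, ?_⟩
      have h1 : (a : II) < (h : II) := lt_of_mem_gapSet_of_F a.2 h.2 (by exact_mod_cast hgh)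
      exact h1.trans b.2.1
    · exact ⟨a, mem_of_gapPre ha, b, mem_of_gapPre hb, by exact_mod_cast hab⟩

end Bridge

/-! ### The master composition lemma -/

/-- Quantifier rank. -/
def qr {L : Language} {α : Type u} : ∀ {k : ℕ}, L.BoundedFormula α k → ℕ
  | _, .falsum => 0
  | _, .equal _ _ => 0
  | _, .rel _ _ => 0
  | _, .imp f g => max (qr f) (qr g)
  | _, .all f => qr f + 1

lemma term_var {β : Type*} (t : LMO.Term β) : ∃ i, t = Term.var i := by
  cases t with
  | var i => exact ⟨i, rfl⟩
  | func f _ => exact (f : Empty).elim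

/-- The index equivalence used when quantifying one more set variable. -/
def eOpt (n k : ℕ) : Option (Fin n ⊕ Fin k) ≃ (Fin n ⊕ Fin (k + 1)) where
  toFun o := o.elim (Sum.inr (Fin.last k)) (Sum.map id Fin.castSucc)
  invFun x := Sum.elim (fun i => some (Sum.inl i))
    (fun j => Fin.lastCases none (fun j' => some (Sum.inr j')) j) x
  left_inv o := by
    cases o with
    | none => simp
    | some i =>
      cases i with
      | inl i => simp
      | inr j => simp
  right_inv x := by
    cases x with
    | inl i => simp
    | inr j =>
      induction j using Fin.lastCases with
      | last => simp
      | cast j' => simp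

lemma eOpt_none (n k : ℕ) : eOpt n k none = Sum.inr (Fin.last k) := rfl

lemma eOpt_some_inl (n k : ℕ) (i : Fin n) : eOpt n k (some (Sum.inl i)) = Sum.inl i := rfl

lemma eOpt_some_inr (n k : ℕ) (j : Fin k) :
    eOpt n k (some (Sum.inr j)) = Sum.inr j.castSucc := rfl

section MasterHelpers

variable {F : Set II} {ι : Type}

lemma mem_colSet_iff {r : ℕ} {b : ι → FinSub} {c : Color r ι} {g : ↥F} :
    g ∈ colSet F r b c ↔ gcol F r b g = c := Iff.rfl

lemma colSet_forall_iff {r : ℕ} {b : ι → FinSub} (P : Color r ι → Prop) :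
    (∀ c, P c → colSet F r b c = ∅) ↔ ∀ g : ↥F, ¬ P (gcol F r b g) := by
  constructor
  · intro h g hP
    have : g ∈ colSet F r b (gcol F r b g) := rfl
    rw [h _ hP] at this
    exact this
  · intro h c hP
    ext g
    simp only [Set.mem_empty_iff_false, iff_false]
    intro hg
    rw [mem_colSet_iff] at hg
    exact h g (hg ▸ hP)

lemma gcol_pat_sub {r : ℕ} {b : ι → FinSub} {g : ↥F} {i j : ι} :
    (gcol F r b g).pat.1 i j ↔ gapPre F g (b i).1 ⊆ gapPre F g (b j).1 := by
  rw [gcol_pat]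
  exact Iff.rfl

lemma gcol_pat_elt {r : ℕ} {b : ι → FinSub} {g : ↥F} {i j : ι} :
    (gcol F r b g).pat.2.1 i j ↔
      ∃ a ∈ gapPre F g (b i).1, ∃ c ∈ gapPre F g (b j).1, a < c := by
  rw [gcol_pat]
  exact Iff.rfl

lemma gcol_pat_emp {r : ℕ} {b : ι → FinSub} {g : ↥F} {i : ι} :
    ¬ (gcol F r b g).pat.2.2 i ↔ (gapPre F g (b i).1).Nonempty := by
  rw [gcol_pat]
  show ¬ (gapPre F g (b i).1 = ∅) ↔ _
  exact not_iff_comm.1 (Iff.symm Set.not_nonempty_iff_eq_empty).symm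

lemma singleton_sub_trc {B : FinSub} {g : ↥F} :
    ({g} : Set ↥F) ⊆ trc F B ↔ (g : II) ∈ B.1 := by
  rw [Set.singleton_subset_iff]
  exact Iff.rfl

lemma singleton_sub_colSet {r : ℕ} {b : ι → FinSub} {c : Color r ι} {g : ↥F} :
    ({g} : Set ↥F) ⊆ colSet F r b c ↔ gcol F r b g = c := by
  rw [Set.singleton_subset_iff]
  exact Iff.rfl

lemma singleton_elt_singleton {g h : ↥F} :
    (∃ a ∈ ({g} : Set ↥F), ∃ b ∈ ({h} : Set ↥F), a < b) ↔ g < h := by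
  simp

end MasterHelpers

section EltFormulas

variable (r : ℕ) {ι : Type} [Finite ι]

/-- "the gap of atom `z` has nonempty `i`-part" -/
def neGF (i : ι) (z : (ι ⊕ Color r ι) ⊕ Fin 2) : LMO.Formula ((ι ⊕ Color r ι) ⊕ Fin 2) :=
  disjK (fun c : {c : Color r ι // ¬ c.pat.2.2 i} => sub2 z (Sum.inl (Sum.inr c.1)))

variable {F : Set II}

lemma realize_neGF {i : ι} {z : (ι ⊕ Color r ι) ⊕ Fin 2} {b : ι → FinSub}
    {w : Fin 2 → Set ↥F} {g : ↥F} (hz : Sum.elim (Sum.elim (fun i => trc F (b i))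
      (colSet F r b)) w z = {g}) :
    (neGF r i z).Realize (Sum.elim (Sum.elim (fun i => trc F (b i)) (colSet F r b)) w) ↔
      (gapPre F g (b i).1).Nonempty := by
  rw [neGF, realize_disjK]
  rw [← gcol_pat_emp (r := r)]
  constructor
  · rintro ⟨c, hc⟩
    rw [realize_sub2, hz] at hc
    simp only [Sum.elim_inl, Sum.elim_inr] at hc
    rw [singleton_sub_colSet] at hc
    rw [hc]
    exact c.2
  · intro h
    refine ⟨⟨gcol F r b g, h⟩, ?_⟩
    rw [realize_sub2, hz]
    simp only [Sum.elim_inl, Sum.elim_inr]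
    rw [singleton_sub_colSet]

/-- Disjunct 1: both witnesses in `F`. -/
def eltD1 (i₁ i₂ : ι) : LMO.Formula (ι ⊕ Color r ι) :=
  Formula.iExs (Fin 2) <|
    atomV (Sum.inr 0) ⊓ atomV (Sum.inr 1) ⊓ sub2 (Sum.inr 0) (Sum.inl (Sum.inl i₁)) ⊓
      sub2 (Sum.inr 1) (Sum.inl (Sum.inl i₂)) ⊓ elt2 (Sum.inr 0) (Sum.inr 1)

/-- Disjunct 2: left witness in `F`, right in a weakly later gap. -/
def eltD2 (i₁ i₂ : ι) : LMO.Formula (ι ⊕ Color r ι) :=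
  Formula.iExs (Fin 2) <|
    atomV (Sum.inr 0) ⊓ atomV (Sum.inr 1) ⊓ sub2 (Sum.inr 0) (Sum.inl (Sum.inl i₁)) ⊓
      neGF r i₂ (Sum.inr 1) ⊓ (elt2 (Sum.inr 0) (Sum.inr 1) ⊔ eq2 (Sum.inr 0) (Sum.inr 1))

/-- Disjunct 3: left witness in a gap, right in `F` strictly later. -/
def eltD3 (i₁ i₂ : ι) : LMO.Formula (ι ⊕ Color r ι) :=
  Formula.iExs (Fin 2) <|
    atomV (Sum.inr 0) ⊓ atomV (Sum.inr 1) ⊓ neGF r i₁ (Sum.inr 0) ⊓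
      sub2 (Sum.inr 1) (Sum.inl (Sum.inl i₂)) ⊓ elt2 (Sum.inr 0) (Sum.inr 1)

/-- Disjunct 4: witnesses in two distinct gaps. -/
def eltD4 (i₁ i₂ : ι) : LMO.Formula (ι ⊕ Color r ι) :=
  Formula.iExs (Fin 2) <|
    atomV (Sum.inr 0) ⊓ atomV (Sum.inr 1) ⊓ neGF r i₁ (Sum.inr 0) ⊓
      neGF r i₂ (Sum.inr 1) ⊓ elt2 (Sum.inr 0) (Sum.inr 1)

/-- Disjunct 5: both witnesses in the same gap. -/
def eltD5 (i₁ i₂ : ι) : LMO.Formula (ι ⊕ Color r ι) :=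
  Formula.iExs (Fin 2) <|
    atomV (Sum.inr 0) ⊓
      disjK (fun c : {c : Color r ι // c.pat.2.1 i₁ i₂} => sub2 (Sum.inr 0) (Sum.inl (Sum.inr c.1)))

lemma realize_eltD1 {i₁ i₂ : ι} {b : ι → FinSub} :
    (eltD1 r i₁ i₂).Realize (Sum.elim (fun i => trc F (b i)) (colSet F r b)) ↔
      ∃ p : ↥F, (p : II) ∈ (b i₁).1 ∧ ∃ q : ↥F, (q : II) ∈ (b i₂).1 ∧ p < q := by
  rw [eltD1, Formula.realize_iExs]
  constructor
  · rintro ⟨w, hw⟩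
    simp only [Formula.realize_inf, realize_atomV, realize_sub2, realize_elt2, id_eq,
      Sum.elim_inl, Sum.elim_inr] at hw
    obtain ⟨⟨⟨⟨⟨p, hp⟩, ⟨q, hq⟩⟩, hs1⟩, hs2⟩, he⟩ := hw
    rw [hp] at hs1 he
    rw [hq] at hs2 he
    exact ⟨p, singleton_sub_trc.1 hs1, q, singleton_sub_trc.1 hs2,
      singleton_elt_singleton.1 he⟩
  · rintro ⟨p, hp, q, hq, hpq⟩
    refine ⟨![{p}, {q}], ?_⟩
    simp only [Formula.realize_inf, realize_atomV, realize_sub2, realize_elt2, id_eq,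
      Sum.elim_inl, Sum.elim_inr, Matrix.cons_val_zero, Matrix.cons_val_one, Matrix.head_cons]
    exact ⟨⟨⟨⟨⟨p, rfl⟩, ⟨q, rfl⟩⟩, singleton_sub_trc.2 hp⟩, singleton_sub_trc.2 hq⟩,
      singleton_elt_singleton.2 hpq⟩

lemma realize_eltD2 {i₁ i₂ : ι} {b : ι → FinSub} :
    (eltD2 r i₁ i₂).Realize (Sum.elim (fun i => trc F (b i)) (colSet F r b)) ↔
      ∃ p : ↥F, (p : II) ∈ (b i₁).1 ∧ ∃ g : ↥F, p ≤ g ∧ (gapPre F g (b i₂).1).Nonempty := by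
  rw [eltD2, Formula.realize_iExs]
  constructor
  · rintro ⟨w, hw⟩
    simp only [Formula.realize_inf, Formula.realize_sup, realize_atomV, realize_sub2,
      realize_elt2, realize_eq2, id_eq, Sum.elim_inl, Sum.elim_inr] at hw
    obtain ⟨⟨⟨⟨⟨p, hp⟩, ⟨q, hq⟩⟩, hs1⟩, hne⟩, he⟩ := hw
    rw [hp] at hs1 he
    rw [hq] at he
    have hne' := (realize_neGF r (w := w) (b := b)
      (z := Sum.inr 1) (g := q) (by simpa using hq)).1 (by
        simpa only [Formula.Realize] using hne)
    refine ⟨p, singleton_sub_trc.1 hs1, q, ?_, hne'⟩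
    rcases he with h | h
    · exact (singleton_elt_singleton.1 h).le
    · exact le_of_eq (by simpa using h)
  · rintro ⟨p, hp, g, hpg, hne⟩
    refine ⟨![{p}, {g}], ?_⟩
    simp only [Formula.realize_inf, Formula.realize_sup, realize_atomV, realize_sub2,
      realize_elt2, realize_eq2, id_eq, Sum.elim_inl, Sum.elim_inr, Matrix.cons_val_zero,
      Matrix.cons_val_one, Matrix.head_cons]
    refine ⟨⟨⟨⟨⟨p, rfl⟩, ⟨g, rfl⟩⟩, singleton_sub_trc.2 hp⟩, ?_⟩, ?_⟩
    · exact (realize_neGF r (w := ![{p}, {g}]) (b := b) (z := Sum.inr 1) (g := g)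
        (by simp)).2 hne
    · rcases lt_or_eq_of_le hpg with h | h
      · exact Or.inl (singleton_elt_singleton.2 h)
      · exact Or.inr (by rw [h])

lemma realize_eltD3 {i₁ i₂ : ι} {b : ι → FinSub} :
    (eltD3 r i₁ i₂).Realize (Sum.elim (fun i => trc F (b i)) (colSet F r b)) ↔
      ∃ g : ↥F, (gapPre F g (b i₁).1).Nonempty ∧ ∃ q : ↥F, (q : II) ∈ (b i₂).1 ∧ g < q := by
  rw [eltD3, Formula.realize_iExs]
  constructor
  · rintro ⟨w, hw⟩
    simp only [Formula.realize_inf, realize_atomV, realize_sub2, realize_elt2, id_eq,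
      Sum.elim_inl, Sum.elim_inr] at hw
    obtain ⟨⟨⟨⟨⟨g, hg⟩, ⟨q, hq⟩⟩, hne⟩, hs2⟩, he⟩ := hw
    rw [hg] at he
    rw [hq] at hs2 he
    have hne' := (realize_neGF r (w := w) (b := b) (z := Sum.inr 0) (g := g)
      (by simpa using hg)).1 (by simpa only [Formula.Realize] using hne)
    exact ⟨g, hne', q, singleton_sub_trc.1 hs2, singleton_elt_singleton.1 he⟩
  · rintro ⟨g, hne, q, hq, hgq⟩
    refine ⟨![{g}, {q}], ?_⟩
    simp only [Formula.realize_inf, realize_atomV, realize_sub2, realize_elt2, id_eq,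
      Sum.elim_inl, Sum.elim_inr, Matrix.cons_val_zero, Matrix.cons_val_one, Matrix.head_cons]
    refine ⟨⟨⟨⟨⟨g, rfl⟩, ⟨q, rfl⟩⟩, ?_⟩, singleton_sub_trc.2 hq⟩,
      singleton_elt_singleton.2 hgq⟩
    exact (realize_neGF r (w := ![{g}, {q}]) (b := b) (z := Sum.inr 0) (g := g)
      (by simp)).2 hne

lemma realize_eltD4 {i₁ i₂ : ι} {b : ι → FinSub} :
    (eltD4 r i₁ i₂).Realize (Sum.elim (fun i => trc F (b i)) (colSet F r b)) ↔
      ∃ g h : ↥F, g < h ∧ (gapPre F g (b i₁).1).Nonempty ∧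
        (gapPre F h (b i₂).1).Nonempty := by
  rw [eltD4, Formula.realize_iExs]
  constructor
  · rintro ⟨w, hw⟩
    simp only [Formula.realize_inf, realize_atomV, realize_sub2, realize_elt2, id_eq,
      Sum.elim_inl, Sum.elim_inr] at hw
    obtain ⟨⟨⟨⟨⟨g, hg⟩, ⟨h, hh⟩⟩, hne1⟩, hne2⟩, he⟩ := hw
    rw [hg] at he
    rw [hh] at he
    have hne1' := (realize_neGF r (w := w) (b := b) (z := Sum.inr 0) (g := g)
      (by simpa using hg)).1 (by simpa only [Formula.Realize] using hne1)
    have hne2' := (realize_neGF r (w := w) (b := b) (z := Sum.inr 1) (g := h)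
      (by simpa using hh)).1 (by simpa only [Formula.Realize] using hne2)
    exact ⟨g, h, singleton_elt_singleton.1 he, hne1', hne2'⟩
  · rintro ⟨g, h, hgh, hne1, hne2⟩
    refine ⟨![{g}, {h}], ?_⟩
    simp only [Formula.realize_inf, realize_atomV, realize_sub2, realize_elt2, id_eq,
      Sum.elim_inl, Sum.elim_inr, Matrix.cons_val_zero, Matrix.cons_val_one, Matrix.head_cons]
    refine ⟨⟨⟨⟨⟨g, rfl⟩, ⟨h, rfl⟩⟩, ?_⟩, ?_⟩, singleton_elt_singleton.2 hgh⟩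
    · exact (realize_neGF r (w := ![{g}, {h}]) (b := b) (z := Sum.inr 0) (g := g)
        (by simp)).2 hne1
    · exact (realize_neGF r (w := ![{g}, {h}]) (b := b) (z := Sum.inr 1) (g := h)
        (by simp)).2 hne2

lemma realize_eltD5 {i₁ i₂ : ι} {b : ι → FinSub} :
    (eltD5 r i₁ i₂).Realize (Sum.elim (fun i => trc F (b i)) (colSet F r b)) ↔
      ∃ g : ↥F, ∃ a ∈ gapPre F g (b i₁).1, ∃ c ∈ gapPre F g (b i₂).1, a < c := by
  rw [eltD5, Formula.realize_iExs]
  constructor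
  · rintro ⟨w, hw⟩
    simp only [Formula.realize_inf, realize_atomV, realize_disjK, realize_sub2, id_eq,
      Sum.elim_inl, Sum.elim_inr] at hw
    obtain ⟨⟨g, hg⟩, c, hc⟩ := hw
    rw [hg] at hc
    rw [singleton_sub_colSet] at hc
    refine ⟨g, ?_⟩
    rw [← gcol_pat_elt (r := r) (b := b) (g := g), hc]
    exact c.2
  · rintro ⟨g, ha⟩
    refine ⟨![{g}, {g}], ?_⟩
    simp only [Formula.realize_inf, realize_atomV, realize_disjK, realize_sub2, id_eq,
      Sum.elim_inl, Sum.elim_inr, Matrix.cons_val_zero]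
    refine ⟨⟨g, rfl⟩, ⟨gcol F r b g, ?_⟩, singleton_sub_colSet.2 rfl⟩
    rw [gcol_pat_elt]
    exact ha

end EltFormulas

section AllHelpers

variable {F : Set II} {n k : ℕ}

lemma gapPre_finite (g : ↥F) {B : Set II} (hB : B.Finite) : (gapPre F g B).Finite :=
  (hB.preimage (Subtype.coe_injective.injOn)).subset (fun _ hx => hx)

lemma gapTuple_snoc (v : Fin n → FinSub) (xs : Fin k → FinSub) (B : FinSub) (g : ↥F) :
    (fun i' : Fin n ⊕ Fin (k+1) => gapPre F g (Sum.elim v (Fin.snoc xs B) i').1)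
      = (optExt (fun i => gapPre F g (Sum.elim v xs i).1) (gapPre F g B.1))
          ∘ (eOpt n k).symm := by
  have h : ∀ o, (fun i' : Fin n ⊕ Fin (k+1) =>
        gapPre F g (Sum.elim v (Fin.snoc xs B) i').1) (eOpt n k o)
      = optExt (fun i => gapPre F g (Sum.elim v xs i).1) (gapPre F g B.1) o := by
    intro o
    cases o with
    | none =>
      show gapPre F g ((Fin.snoc xs B : Fin (k+1) → FinSub) (Fin.last k)).1 = _
      rw [Fin.snoc_last]
      rfl
    | some i =>
      cases i with
      | inl i => rfl
      | inr j =>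
        show gapPre F g ((Fin.snoc xs B : Fin (k+1) → FinSub) j.castSucc).1 = _
        rw [Fin.snoc_castSucc]
        rfl
  funext i'
  have h2 := h ((eOpt n k).symm i')
  rwa [Equiv.apply_symm_apply] at h2

lemma gcol_snoc (r' : ℕ) (v : Fin n → FinSub) (xs : Fin k → FinSub) (B : FinSub) (g : ↥F) :
    gcol F r' (Sum.elim v (Fin.snoc xs B)) g
      = Color.map (eOpt n k) (colorOf r' (gapT F g)
          (optExt (fun i => gapPre F g (Sum.elim v xs i).1) (gapPre F g B.1))) := by
  rw [gcol, gapTuple_snoc, colorOf_map]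

lemma gcol_snoc_mem (r' : ℕ) (v : Fin n → FinSub) (xs : Fin k → FinSub) (B : FinSub)
    (g : ↥F) :
    colorOf r' (gapT F g) (optExt (fun i => gapPre F g (Sum.elim v xs i).1)
        (gapPre F g B.1))
      ∈ (gcol F (r'+1) (Sum.elim v xs) g).2 :=
  ⟨gapPre F g B.1, gapPre_finite g B.2, rfl⟩

lemma construct_B (hF : F.Finite) (T : Set ↥F) (E : ∀ g : ↥F, Set (gapT F g))
    (hE : ∀ g, (E g).Finite) :
    ∃ B : FinSub, trc F B = T ∧ ∀ g, gapPre F g B.1 = E g := by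
  haveI := hF.to_subtype
  refine ⟨⟨(fun x : ↥F => (x : II)) '' T ∪ ⋃ g : ↥F, (fun x : gapT F g => (x : II)) '' (E g),
    (T.toFinite.image _).union (Set.finite_iUnion fun g => (hE g).image _)⟩, ?_, ?_⟩
  · ext x
    simp only [trc, Set.mem_setOf_eq, Set.mem_union, Set.mem_image, Set.mem_iUnion]
    constructor
    · rintro (⟨y, hy, hyx⟩ | ⟨g, y, hy, hyx⟩)
      · rwa [← Subtype.coe_injective hyx]
      · exact absurd (hyx ▸ y.2) (fun h => gapSet_not_mem_F h x.2)
    · intro hx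
      exact Or.inl ⟨x, hx, rfl⟩
  · intro g
    ext y
    simp only [gapPre, Set.mem_setOf_eq, Set.mem_union, Set.mem_image, Set.mem_iUnion]
    constructor
    · rintro (⟨z, hz, hzy⟩ | ⟨h, z, hz, hzy⟩)
      · exact absurd (hzy ▸ z.2) (fun hh => gapSet_not_mem_F y.2 hh)
      · by_cases hgh : h = g
        · subst hgh
          rwa [← Subtype.coe_injective hzy]
        · exfalso
          have hzy' : (y : II) ∈ gapSet F ↑h := hzy ▸ z.2
          have : (y : II) ∈ gapSet F ↑h ∩ gapSet F ↑g := ⟨hzy', y.2⟩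
          rw [gapSet_disjoint h.2 g.2 (fun hc => hgh (Subtype.coe_injective hc))] at this
          exact this
    · intro hy
      exact Or.inr ⟨g, y, hy, rfl⟩

end AllHelpers

section CondF

variable (n k r' : ℕ)

/-- Variable relabeling for the `all` case. -/
def allRho : (Fin n ⊕ Fin (k+1)) ⊕ Color r' (Fin n ⊕ Fin (k+1)) →
    ((Fin n ⊕ Fin k) ⊕ Color (r'+1) (Fin n ⊕ Fin k)) ⊕
      Option (Color r' (Fin n ⊕ Fin (k+1))) :=
  Sum.elim
    (Sum.elim (fun i => Sum.inl (Sum.inl (Sum.inl i)))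
      (fun j => Fin.lastCases (Sum.inr none) (fun j' => Sum.inl (Sum.inl (Sum.inr j'))) j))
    (fun c => Sum.inr (some c))

/-- The compatibility condition formula for the `all` case. -/
def condF : LMO.Formula
    (((Fin n ⊕ Fin k) ⊕ Color (r'+1) (Fin n ⊕ Fin k)) ⊕
      Option (Color r' (Fin n ⊕ Fin (k+1)))) :=
  Formula.iAlls Unit <|
    (atomV (Sum.inr ())).imp <|
      disjK (fun p : {p : Color (r'+1) (Fin n ⊕ Fin k) × Color r' (Fin n ⊕ Fin (k+1)) //
          p.2 ∈ Color.map (eOpt n k) '' p.1.2} =>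
        sub2 (Sum.inr ()) (Sum.inl (Sum.inl (Sum.inr p.1.1))) ⊓
        sub2 (Sum.inr ()) (Sum.inl (Sum.inr (some p.1.2))) ⊓
        conjK (fun q'' : {q'' : Color r' (Fin n ⊕ Fin (k+1)) // q'' ≠ p.1.2} =>
          ∼(sub2 (Sum.inr ()) (Sum.inl (Sum.inr (some q''.1))))))

variable {F : Set II}

lemma realize_condF {b : Fin n ⊕ Fin k → FinSub}
    {w : Option (Color r' (Fin n ⊕ Fin (k+1))) → Set ↥F} :
    (condF n k r').Realize
      (Sum.elim (Sum.elim (fun i => trc F (b i)) (colSet F (r'+1) b)) w) ↔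
      ∀ g : ↥F, ∃ q' : Color r' (Fin n ⊕ Fin (k+1)),
        q' ∈ Color.map (eOpt n k) '' (gcol F (r'+1) b g).2 ∧
        g ∈ w (some q') ∧ ∀ q'', g ∈ w (some q'') → q'' = q' := by
  rw [condF, Formula.realize_iAlls]
  constructor
  · intro h g
    have h2 := h (fun _ => {g})
    simp only [Formula.realize_imp, realize_atomV, realize_disjK, Formula.realize_inf,
      Formula.realize_not, realize_sub2, realize_conjK, id_eq, Sum.elim_inl,
      Sum.elim_inr] at h2
    obtain ⟨p, ⟨hq, hw⟩, huni⟩ := h2 ⟨g, rfl⟩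
    rw [singleton_sub_colSet] at hq
    rw [Set.singleton_subset_iff] at hw
    refine ⟨p.1.2, ?_, hw, ?_⟩
    · rw [hq]
      exact p.2
    · intro q'' hq''
      by_contra hne
      exact (huni ⟨q'', hne⟩) (Set.singleton_subset_iff.2 hq'')
  · intro h z
    simp only [Formula.realize_imp, realize_atomV, realize_disjK, Formula.realize_inf,
      Formula.realize_not, realize_sub2, realize_conjK, id_eq, Sum.elim_inl, Sum.elim_inr]
    rintro ⟨g, hg⟩
    obtain ⟨q', hext, hmem, huniq⟩ := h g
    refine ⟨⟨(gcol F (r'+1) b g, q'), hext⟩, ⟨?_, ?_⟩, ?_⟩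
    · rw [hg, singleton_sub_colSet]
    · rw [hg, Set.singleton_subset_iff]
      exact hmem
    · rintro ⟨q'', hne⟩
      rw [hg, Set.singleton_subset_iff]
      intro hq''
      exact hne (huniq q'' hq'')

/-- Transfer of realization along an equality of valuations. -/
lemma realize_val_congr {α : Type} {M : Type} [LMO.Structure M] {φ : LMO.Formula α}
    {v v' : α → M} (h : v = v') (hφ : φ.Realize v) : φ.Realize v' := h ▸ hφ

end CondF

section Master

variable {n : ℕ}

/-- The master composition lemma. -/
theorem master : ∀ {k : ℕ} (φ : LMO.BoundedFormula (Fin n) k) (r : ℕ), qr φ ≤ r →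
    ∃ ψ : LMO.Formula ((Fin n ⊕ Fin k) ⊕ Color r (Fin n ⊕ Fin k)),
      ∀ (F : Set II), F.Finite → (0:II) ∈ F → ∀ (v : Fin n → FinSub) (xs : Fin k → FinSub),
        φ.Realize v xs ↔
          ψ.Realize (M := Set ↥F)
            (Sum.elim (fun i => trc F (Sum.elim v xs i)) (colSet F r (Sum.elim v xs))) := by
  intro k₀ φ₀
  induction φ₀ with
  | falsum =>
    intro r hr
    exact ⟨⊥, fun F hF h0 v xs => by
      simp only [Formula.realize_bot]
      exact Iff.rfl⟩
  | @equal k t₁ t₂ =>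
    intro r hr
    obtain ⟨i₁, rfl⟩ := term_var t₁
    obtain ⟨i₂, rfl⟩ := term_var t₂
    refine ⟨eq2 (Sum.inl i₁) (Sum.inl i₂) ⊓
      conjK (fun c : {c : Color r (Fin n ⊕ Fin k) //
          ¬ ((Color.pat c).1 i₁ i₂ ∧ (Color.pat c).1 i₂ i₁)} => emptyV (Sum.inr c.1)),
      fun F hF h0 v xs => ?_⟩
    have lhs : (BoundedFormula.equal (Term.var i₁) (Term.var i₂) :
          LMO.BoundedFormula (Fin n) k).Realize v xs ↔
        (Sum.elim v xs i₁).1 = (Sum.elim v xs i₂).1 := by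
      show (Term.realize (Sum.elim v xs) (Term.var i₁)
          = Term.realize (Sum.elim v xs) (Term.var i₂)) ↔ _
      simp [Subtype.ext_iff]
    rw [lhs, Formula.realize_inf, realize_eq2, realize_conjK, eq_decomp hF h0]
    simp only [Sum.elim_inl, Sum.elim_inr, realize_emptyV]
    apply and_congr
    · exact Iff.rfl
    · rw [show (∀ c : {c : Color r (Fin n ⊕ Fin k) //
            ¬ ((Color.pat c).1 i₁ i₂ ∧ (Color.pat c).1 i₂ i₁)},
          colSet F r (Sum.elim v xs) c.1 = ∅)
        ↔ ∀ c : Color r (Fin n ⊕ Fin k), (¬ ((Color.pat c).1 i₁ i₂ ∧ (Color.pat c).1 i₂ i₁)) →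
          colSet F r (Sum.elim v xs) c = ∅
        from ⟨fun h c hc => h ⟨c, hc⟩, fun h c => h c.1 c.2⟩]
      rw [colSet_forall_iff]
      apply forall_congr'
      intro g
      rw [not_not, gcol_pat_sub, gcol_pat_sub, ← Set.Subset.antisymm_iff]
  | @rel k l R ts =>
    intro r hr
    cases R with
    | sub =>
      obtain ⟨i₁, h1⟩ := term_var (ts 0)
      obtain ⟨i₂, h2⟩ := term_var (ts 1)
      refine ⟨sub2 (Sum.inl i₁) (Sum.inl i₂) ⊓
        conjK (fun c : {c : Color r (Fin n ⊕ Fin k) //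
            ¬ (Color.pat c).1 i₁ i₂} => emptyV (Sum.inr c.1)),
        fun F hF h0 v xs => ?_⟩
      have lhs : (BoundedFormula.rel MORel.sub ts :
            LMO.BoundedFormula (Fin n) k).Realize v xs ↔
          (Sum.elim v xs i₁).1 ⊆ (Sum.elim v xs i₂).1 := by
        show RelMap (L := LMO) (M := FinSub) MORel.sub (fun i => Term.realize (Sum.elim v xs) (ts i)) ↔ _
        rw [relMap_sub_fin]
        simp [h1, h2]
      rw [lhs, Formula.realize_inf, realize_sub2, realize_conjK, subset_decomp hF h0]
      simp only [Sum.elim_inl, Sum.elim_inr, realize_emptyV]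
      apply and_congr
      · exact Iff.rfl
      · rw [show (∀ c : {c : Color r (Fin n ⊕ Fin k) // ¬ (Color.pat c).1 i₁ i₂},
            colSet F r (Sum.elim v xs) c.1 = ∅)
          ↔ ∀ c : Color r (Fin n ⊕ Fin k), (¬ (Color.pat c).1 i₁ i₂) →
            colSet F r (Sum.elim v xs) c = ∅
          from ⟨fun h c hc => h ⟨c, hc⟩, fun h c => h c.1 c.2⟩]
        rw [colSet_forall_iff]
        apply forall_congr'
        intro g
        rw [not_not, gcol_pat_sub]
    | elt =>
      obtain ⟨i₁, h1⟩ := term_var (ts 0)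
      obtain ⟨i₂, h2⟩ := term_var (ts 1)
      refine ⟨eltD1 r i₁ i₂ ⊔ (eltD2 r i₁ i₂ ⊔ (eltD3 r i₁ i₂ ⊔ (eltD4 r i₁ i₂ ⊔
        eltD5 r i₁ i₂))), fun F hF h0 v xs => ?_⟩
      have lhs : (BoundedFormula.rel MORel.elt ts :
            LMO.BoundedFormula (Fin n) k).Realize v xs ↔
          ∃ a ∈ (Sum.elim v xs i₁).1, ∃ c ∈ (Sum.elim v xs i₂).1, a < c := by
        show RelMap (L := LMO) (M := FinSub) MORel.elt (fun i => Term.realize (Sum.elim v xs) (ts i)) ↔ _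
        rw [relMap_elt_fin]
        simp [h1, h2]
      rw [lhs, elt_decomp hF h0]
      rw [Formula.realize_sup, Formula.realize_sup, Formula.realize_sup, Formula.realize_sup]
      rw [realize_eltD1, realize_eltD2, realize_eltD3, realize_eltD4, realize_eltD5]
  | @imp k φ₁ φ₂ ih₁ ih₂ =>
    intro r hr
    obtain ⟨ψ₁, h₁⟩ := ih₁ r (le_trans (le_max_left _ _) hr)
    obtain ⟨ψ₂, h₂⟩ := ih₂ r (le_trans (le_max_right _ _) hr)
    refine ⟨ψ₁.imp ψ₂, fun F hF h0 v xs => ?_⟩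
    rw [BoundedFormula.realize_imp, Formula.realize_imp, h₁ F hF h0 v xs, h₂ F hF h0 v xs]
  | @all k φ' ih =>
    intro r hr
    cases r with
    | zero => exact absurd hr (by simp [qr])
    | succ r' =>
      obtain ⟨ψ', hψ'⟩ := ih r' (Nat.succ_le_succ_iff.1 hr)
      refine ⟨Formula.iAlls
        (Option (Color r' (Fin n ⊕ Fin (k+1))))
        ((condF n k r').imp (Formula.relabel (allRho n k r') ψ')),
        fun F hF h0 v xs => ?_⟩
      haveI := hF.to_subtype
      rw [BoundedFormula.realize_all, Formula.realize_iAlls]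
      constructor
      · -- from WSO to MSO
        intro hAll w
        rw [Formula.realize_imp]
        intro hcondR
        have hcond := (realize_condF n k r' (b := Sum.elim v xs) (w := w)).1 hcondR
        have hE : ∀ g : ↥F, ∃ E : Set (gapT F g), E.Finite ∧
            Color.map (eOpt n k) (colorOf r' (gapT F g)
              (optExt (fun i => gapPre F g (Sum.elim v xs i).1) E))
            = Classical.choose (hcond g) := by
          intro g
          obtain ⟨hext, _, _⟩ := Classical.choose_spec (hcond g)
          obtain ⟨d, hd, hdc⟩ := hext
          obtain ⟨E, hEfin, hEc⟩ := hd
          exact ⟨E, hEfin, by rw [hEc]; exact hdc⟩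
        choose E hEfin hEc using hE
        obtain ⟨B, hBtr, hBgap⟩ := construct_B hF (w none) E hEfin
        have hφ' := (hψ' F hF h0 v (Fin.snoc xs B)).1 (hAll B)
        rw [Formula.realize_relabel]
        have hval : ((fun a => Sum.elim (Sum.elim (fun i => trc F (Sum.elim v xs i))
              (colSet F (r'+1) (Sum.elim v xs))) w (id a)) ∘ (allRho n k r'))
            = Sum.elim (fun i => trc F (Sum.elim v (Fin.snoc xs B) i))
                (colSet F r' (Sum.elim v (Fin.snoc xs B))) := by
          funext x
          cases x with
          | inl i' =>
            cases i' with
            | inl i => rfl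
            | inr j =>
              induction j using Fin.lastCases with
              | last =>
                simp only [Function.comp_apply, allRho, Sum.elim_inl, Sum.elim_inr,
                  Fin.lastCases_last, id_eq, Fin.snoc_last]
                exact hBtr.symm
              | cast j' =>
                simp only [Function.comp_apply, allRho, Sum.elim_inl, Sum.elim_inr,
                  Fin.lastCases_castSucc, id_eq, Fin.snoc_castSucc]
          | inr c =>
            show w (some c) = colSet F r' (Sum.elim v (Fin.snoc xs B)) c
            ext g
            obtain ⟨_, hmem, huniq⟩ := Classical.choose_spec (hcond g)
            rw [mem_colSet_iff, gcol_snoc, hBgap g, hEc g]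
            constructor
            · intro hg
              exact (huniq c hg).symm
            · intro hg
              exact hg ▸ hmem
        exact realize_val_congr hval.symm hφ'
      · -- from MSO to WSO
        intro hImp B
        have hw := hImp (fun o =>
          o.elim (trc F B) (fun q' => colSet F r' (Sum.elim v (Fin.snoc xs B)) q'))
        rw [Formula.realize_imp] at hw
        have hcond : (condF n k r').Realize
            (Sum.elim (Sum.elim (fun i => trc F (Sum.elim v xs i))
              (colSet F (r'+1) (Sum.elim v xs)))
              (fun o => o.elim (trc F B)
                (fun q' => colSet F r' (Sum.elim v (Fin.snoc xs B)) q'))) := by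
          rw [realize_condF]
          intro g
          refine ⟨gcol F r' (Sum.elim v (Fin.snoc xs B)) g, ?_, rfl, ?_⟩
          · exact ⟨_, gcol_snoc_mem r' v xs B g, (gcol_snoc r' v xs B g).symm⟩
          · intro q'' hq''
            exact (mem_colSet_iff.1 hq'').symm
        have hrel := hw hcond
        rw [Formula.realize_relabel] at hrel
        have hval : ((fun a => Sum.elim (Sum.elim (fun i => trc F (Sum.elim v xs i))
              (colSet F (r'+1) (Sum.elim v xs)))
              (fun o => o.elim (trc F B)
                (fun q' => colSet F r' (Sum.elim v (Fin.snoc xs B)) q')) (id a))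
              ∘ (allRho n k r'))
            = Sum.elim (fun i => trc F (Sum.elim v (Fin.snoc xs B) i))
                (colSet F r' (Sum.elim v (Fin.snoc xs B))) := by
          funext x
          cases x with
          | inl i' =>
            cases i' with
            | inl i => rfl
            | inr j =>
              induction j using Fin.lastCases with
              | last =>
                simp only [Function.comp_apply, allRho, Sum.elim_inl, Sum.elim_inr,
                  Fin.lastCases_last, id_eq, Fin.snoc_last, Option.elim_none]
              | cast j' =>
                simp only [Function.comp_apply, allRho, Sum.elim_inl, Sum.elim_inr,
                  Fin.lastCases_castSucc, id_eq, Fin.snoc_castSucc]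
          | inr c => rfl
        exact (hψ' F hF h0 v (Fin.snoc xs B)).2 (realize_val_congr hval hrel)

end Master

/-! ### All gaps are isomorphic: constant color of the empty tuple -/

section Gaps

instance : Countable II := Countable.of_equiv _ (Equiv.subtypeEquiv (Equiv.refl ℚ)
  (fun _ => Iff.rfl)).symm

variable {F : Set II}

lemma gapSet_nonempty (hF : F.Finite) {g : II} (hg : g ∈ F) : (gapSet F g).Nonempty := by
  by_cases hT : ({f ∈ F | g < f}).Nonempty
  · obtain ⟨f₀, hf₀, hmin⟩ := (show ∃ a ∈ {f ∈ F | g < f}, ∀ a' ∈ {f ∈ F | g < f}, id a' ≤ id a → id a = id a' from by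
      obtain ⟨g', hg', hm⟩ := (hF.subset (Set.sep_subset _ _)).exists_minimalFor id _ hT
      exact ⟨g', hg', fun a' ha' h => le_antisymm (hm ha' h) h⟩)
    obtain ⟨x, hx1, hx2⟩ := exists_between hf₀.2
    refine ⟨x, hx1, fun f hf hgf => ?_⟩
    refine hx2.trans_le ?_
    by_contra hc
    push_neg at hc
    have heq : f₀ = f := hmin f ⟨hf, hgf⟩ hc.le
    exact absurd (heq ▸ hc) (lt_irrefl _)
  · refine ⟨g + 1, lt_add_of_pos_right g zero_lt_one, fun f hf hgf => ?_⟩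
    exact absurd ⟨f, hf, hgf⟩ hT

lemma gapSet_noMax (hF : F.Finite) {g x : II} (hx : x ∈ gapSet F g) :
    ∃ y ∈ gapSet F g, x < y := by
  by_cases hT : ({f ∈ F | g < f}).Nonempty
  · obtain ⟨f₀, hf₀, hmin⟩ := (show ∃ a ∈ {f ∈ F | g < f}, ∀ a' ∈ {f ∈ F | g < f}, id a' ≤ id a → id a = id a' from by
      obtain ⟨g', hg', hm⟩ := (hF.subset (Set.sep_subset _ _)).exists_minimalFor id _ hT
      exact ⟨g', hg', fun a' ha' h => le_antisymm (hm ha' h) h⟩)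
    have hxf₀ : x < f₀ := hx.2 f₀ hf₀.1 hf₀.2
    obtain ⟨y, hy1, hy2⟩ := exists_between hxf₀
    refine ⟨y, ⟨hx.1.trans hy1, fun f hf hgf => ?_⟩, hy1⟩
    refine hy2.trans_le ?_
    by_contra hc
    push_neg at hc
    have heq : f₀ = f := hmin f ⟨hf, hgf⟩ hc.le
    exact absurd (heq ▸ hc) (lt_irrefl _)
  · refine ⟨x + 1, ⟨hx.1.trans (lt_add_of_pos_right x zero_lt_one), fun f hf hgf => ?_⟩,
      lt_add_of_pos_right x zero_lt_one⟩
    exact absurd ⟨f, hf, hgf⟩ hT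

lemma gapSet_noMin {g x : II} (hx : x ∈ gapSet F g) : ∃ y ∈ gapSet F g, y < x := by
  obtain ⟨y, hy1, hy2⟩ := exists_between hx.1
  exact ⟨y, ⟨hy1, fun f hf hgf => hy2.trans (hx.2 f hf hgf)⟩, hy2⟩

lemma gapSet_dense {g x z : II} (hx : x ∈ gapSet F g) (hz : z ∈ gapSet F g) (hxz : x < z) :
    ∃ y ∈ gapSet F g, x < y ∧ y < z := by
  obtain ⟨y, hy1, hy2⟩ := exists_between hxz
  exact ⟨y, ⟨hx.1.trans hy1, fun f hf hgf => hy2.trans (hz.2 f hf hgf)⟩, hy1, hy2⟩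

lemma subtype_orderIso_Ioi (S : Set II) (h1 : S.Nonempty)
    (h2 : ∀ x ∈ S, ∃ y ∈ S, y < x) (h3 : ∀ x ∈ S, ∃ y ∈ S, x < y)
    (h4 : ∀ x ∈ S, ∀ z ∈ S, x < z → ∃ y ∈ S, x < y ∧ y < z) :
    Nonempty (↥S ≃o ↥(Set.Ioi (0 : II))) := by
  haveI : Nonempty ↥S := h1.to_subtype
  haveI : DenselyOrdered ↥S := ⟨fun a b hab => by
    obtain ⟨y, hy, hl, hr⟩ := h4 a a.2 b b.2 (by exact_mod_cast hab)
    exact ⟨⟨y, hy⟩, by exact_mod_cast hl, by exact_mod_cast hr⟩⟩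
  haveI : NoMinOrder ↥S := ⟨fun a => by
    obtain ⟨y, hy, h⟩ := h2 a a.2
    exact ⟨⟨y, hy⟩, by exact_mod_cast h⟩⟩
  haveI : NoMaxOrder ↥S := ⟨fun a => by
    obtain ⟨y, hy, h⟩ := h3 a a.2
    exact ⟨⟨y, hy⟩, by exact_mod_cast h⟩⟩
  haveI : Nonempty ↥(Set.Ioi (0 : II)) := ⟨⟨(1 : II), by simp [Set.mem_Ioi]⟩⟩
  haveI : DenselyOrdered ↥(Set.Ioi (0 : II)) := ⟨fun a b hab => by
    obtain ⟨y, hl, hr⟩ := exists_between (show (a : II) < b from hab)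
    exact ⟨⟨y, a.2.trans hl⟩, by exact_mod_cast hl, by exact_mod_cast hr⟩⟩
  haveI : NoMinOrder ↥(Set.Ioi (0 : II)) := ⟨fun a => by
    obtain ⟨y, hl, hr⟩ := exists_between (show (0 : II) < a from a.2)
    exact ⟨⟨y, hl⟩, by exact_mod_cast hr⟩⟩
  haveI : NoMaxOrder ↥(Set.Ioi (0 : II)) := ⟨fun a => by
    refine ⟨⟨(a : II) + 1, (show (0 : II) < a from a.2).trans (lt_add_of_pos_right _ zero_lt_one)⟩, ?_⟩
    exact_mod_cast lt_add_of_pos_right (a : II) zero_lt_one⟩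
  exact Order.iso_of_countable_dense ↥S ↥(Set.Ioi (0 : II))

/-- The color of the empty tuple on the reference gap. -/
def c0 (r : ℕ) (ι : Type) : Color r ι :=
  colorOf r ↥(Set.Ioi (0 : II)) (fun _ : ι => ∅)

lemma colorOf_gap_empty (hF : F.Finite) (g : ↥F) (r : ℕ) (ι : Type) :
    colorOf r (gapT F g) (fun _ : ι => ∅) = c0 r ι := by
  obtain ⟨e⟩ := subtype_orderIso_Ioi (gapSet F ↑g) (gapSet_nonempty hF g.2)
    (fun x hx => gapSet_noMin hx) (fun x hx => gapSet_noMax hF hx)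
    (fun x hx z hz hxz => gapSet_dense hx hz hxz)
  have h := colorOf_iso r e (fun _ : ι => (∅ : Set (gapT F g)))
  rw [← h, c0]
  congr 1
  funext i
  exact Set.image_empty _

end Gaps



end FV

/-- For every `L_MO`-formula `φ(X₁,…,Xₙ)` there exists an `L_MO`-formula
`ψ(X₁,…,Xₙ)` such that for every tuple `Ā` of finite subsets of `𝕀`:
`WSO(𝕀) ⊨ φ(Ā)` iff `MSO(⌊Ā⌋) ⊨ ψ(Ā)`, where `⌊Ā⌋ = {0} ∪ A₁ ∪ … ∪ Aₙ` is viewed as a finite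
suborder of `𝕀` and `MSO(⌊Ā⌋)` is the `L_MO`-structure on its powerset. -/
theorem feferman_vaught_WSO (n : ℕ) (φ : LMO.Formula (Fin n)) :
    ∃ ψ : LMO.Formula (Fin n),
      ∀ A : Fin n → FinSub,
        φ.Realize A ↔
          ψ.Realize (fun i => ({x : ↥(floorSet A) | (x : II) ∈ (A i).1} :
            Set ↥(floorSet A))) := by
  classical
  obtain ⟨ψ₀, hψ₀⟩ := master (n := n) (k := 0) φ (qr φ) le_rfl
  refine ⟨Formula.iExs (Color (qr φ) (Fin n ⊕ Fin 0))
    ((univV (Sum.inr (c0 (qr φ) (Fin n ⊕ Fin 0))) ⊓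
      conjK (fun c : {c : Color (qr φ) (Fin n ⊕ Fin 0) // c ≠ c0 (qr φ) (Fin n ⊕ Fin 0)} =>
        emptyV (Sum.inr c.1))) ⊓
      Formula.relabel (Sum.map (Sum.elim id Fin.elim0) id) ψ₀), fun A => ?_⟩
  have hFfin : (floorSet A).Finite :=
    (Set.finite_singleton 0).union (Set.finite_iUnion fun i => (A i).2)
  have h0 : (0 : II) ∈ floorSet A := Or.inl rfl
  have hsub : ∀ i, (A i).1 ⊆ floorSet A :=
    fun i x hx => Or.inr (Set.mem_iUnion.2 ⟨i, hx⟩)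
  have hmaster := hψ₀ (floorSet A) hFfin h0 A default
  haveI : Subsingleton (Fin 0 → FinSub) := ⟨fun f g => funext fun x => x.elim0⟩
  have hFR : φ.Realize A ↔ BoundedFormula.Realize φ A default := by
    unfold Formula.Realize
    exact iff_of_eq (congrArg (BoundedFormula.Realize φ A) (Subsingleton.elim _ _))
  rw [hFR]
  have hgcol : ∀ g : ↥(floorSet A),
      gcol (floorSet A) (qr φ) (Sum.elim A (default : Fin 0 → FinSub)) g
        = c0 (qr φ) (Fin n ⊕ Fin 0) := by
    intro g
    rw [gcol]
    have hemp : (fun i : Fin n ⊕ Fin 0 =>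
        gapPre (floorSet A) g ((Sum.elim A (default : Fin 0 → FinSub) i) : FinSub).1)
        = fun _ => ∅ := by
      funext i
      cases i with
      | inl i =>
        ext x
        simp only [Set.mem_empty_iff_false, iff_false]
        intro hx
        exact gapSet_not_mem_F x.2 (hsub i hx)
      | inr j => exact j.elim0
    rw [hemp]
    exact colorOf_gap_empty hFfin g (qr φ) _
  have hcolSet : ∀ c, colSet (floorSet A) (qr φ) (Sum.elim A (default : Fin 0 → FinSub)) c
      = if c = c0 (qr φ) (Fin n ⊕ Fin 0) then Set.univ else ∅ := by
    intro c
    by_cases hc : c = c0 (qr φ) (Fin n ⊕ Fin 0)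
    · subst hc
      rw [if_pos rfl]
      ext g
      simp only [Set.mem_univ, iff_true]
      exact hgcol g
    · rw [if_neg hc]
      ext g
      simp only [Set.mem_empty_iff_false, iff_false]
      intro hg
      exact hc ((mem_colSet_iff.1 hg) ▸ hgcol g)
  rw [Formula.realize_iExs]
  constructor
  · intro hφ
    refine ⟨colSet (floorSet A) (qr φ) (Sum.elim A (default : Fin 0 → FinSub)), ?_⟩
    rw [Formula.realize_inf, Formula.realize_inf]
    refine ⟨⟨?_, ?_⟩, ?_⟩
    · rw [realize_univV]
      simp only [id_eq, Sum.elim_inr]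
      rw [hcolSet, if_pos rfl]
    · rw [realize_conjK]
      intro c
      rw [realize_emptyV]
      simp only [id_eq, Sum.elim_inr]
      rw [hcolSet, if_neg c.2]
    · rw [Formula.realize_relabel]
      refine realize_val_congr ?_ (hmaster.1 hφ)
      funext x
      cases x with
      | inl i' =>
        cases i' with
        | inl i => rfl
        | inr j => exact j.elim0
      | inr c => rfl
  · rintro ⟨w, hw⟩
    rw [Formula.realize_inf, Formula.realize_inf] at hw
    obtain ⟨⟨hw1, hw2⟩, hw3⟩ := hw
    have hweq : w = colSet (floorSet A) (qr φ) (Sum.elim A (default : Fin 0 → FinSub)) := by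
      funext c
      by_cases hc : c = c0 (qr φ) (Fin n ⊕ Fin 0)
      · subst hc
        rw [realize_univV] at hw1
        simp only [id_eq, Sum.elim_inr] at hw1
        rw [hw1, hcolSet, if_pos rfl]
      · rw [realize_conjK] at hw2
        have := hw2 ⟨c, hc⟩
        rw [realize_emptyV] at this
        simp only [id_eq, Sum.elim_inr] at this
        rw [this, hcolSet, if_neg hc]
    rw [Formula.realize_relabel] at hw3
    rw [hweq] at hw3
    refine hmaster.2 (realize_val_congr ?_ hw3)
    funext x
    cases x with
    | inl i' =>
      cases i' with
      | inl i => rfl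
      | inr j => exact j.elim0
    | inr c => rfl

end MCpaper
end

section
/- There is an existential L_L-formula φ(X,Y,Z) such that for all finite subsets A, B, C of 𝕀: L(𝕀) ⊨ φ(A,B,C) if and only if 𝔰⁻¹(A,B) = C. -/
namespace MCpaper

open FirstOrder Language Structure Set

namespace SInvAux

lemma not_mem_lSet_of_interior {Y : Set II} {i k : II} (h : Icc i k ⊆ Y) (hik : i < k) :
    k ∉ lSet Y := by
  rintro ⟨-, hk⟩
  rcases hk with rfl | ⟨k', hk', hgap⟩
  · exact absurd hik (not_lt.2 (zero_le : (0:II) ≤ i))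
  · obtain ⟨x, hx1, hx2⟩ := exists_between (max_lt hk' hik)
    have hx : x ∈ Ioo k' k ∩ Y :=
      ⟨⟨(le_max_left _ _).trans_lt hx1, hx2⟩, h ⟨(le_max_right _ _).trans hx1.le, hx2.le⟩⟩
    rw [hgap] at hx; exact hx

lemma not_mem_rSet_of_interior {Z : Set II} {k j : II} (h : Icc k j ⊆ Z) (hkj : k < j) :
    k ∉ rSet Z := by
  rintro ⟨-, k'', hk'', hgap⟩
  obtain ⟨x, hx1, hx2⟩ := exists_between (lt_min hk'' hkj)
  have hx : x ∈ Ioo k k'' ∩ Z :=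
    ⟨⟨hx1, hx2.trans_le (min_le_left _ _)⟩, h ⟨hx1.le, (hx2.trans_le (min_le_right _ _)).le⟩⟩
  rw [hgap] at hx; exact hx

lemma bound_of_maxCond {Y : Set II} (h9 : {i ∈ Y | ∀ j ∈ Y, j ≤ i} = ∅ → Y = ∅)
    {x : II} (hx : x ∈ Y) : ∃ u, ∀ v ∈ Y, v ≤ u := by
  rcases eq_empty_or_nonempty {i ∈ Y | ∀ j ∈ Y, j ≤ i} with h | ⟨u, hu⟩
  · rw [h9 h] at hx; exact absurd hx (notMem_empty x)
  · exact ⟨u, hu.2⟩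

lemma exists_right_end {Y : Set II} (hY : IsFCI Y) (hb : ∃ u, ∀ x ∈ Y, x ≤ u)
    {i : II} (hi : i ∈ Y) : ∃ m, i ≤ m ∧ Icc i m ⊆ Y ∧ m ∈ rSet Y := by
  classical
  obtain ⟨k, f, hf, rfl⟩ := hY
  obtain ⟨u, hu⟩ := hb
  have hIcc : ∀ m : Fin k, ∃ a b : II, f m = Icc a b := by
    intro m
    rcases hf m with ⟨a, b, hab⟩ | ⟨a, ha⟩
    · exact ⟨a, b, hab⟩
    · exfalso
      have h1 : max a (u + 1) ∈ f m := by rw [ha]; exact mem_Ici.2 (le_max_left _ _)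
      have h2 := hu _ (mem_iUnion.2 ⟨m, h1⟩)
      exact absurd (le_trans (le_max_right _ _) h2) (not_le.2 (lt_add_one u))
  choose a b hab using hIcc
  obtain ⟨m0, hm0⟩ := mem_iUnion.1 hi
  rw [hab m0] at hm0
  set P : Fin k → Prop := fun m => i ≤ b m ∧ Icc i (b m) ⊆ ⋃ m', f m' with hP
  have hP0 : P m0 := by
    refine ⟨hm0.2, fun x hx => mem_iUnion.2 ⟨m0, ?_⟩⟩
    rw [hab m0]; exact ⟨hm0.1.trans hx.1, hx.2⟩
  haveI : DecidablePred P := Classical.decPred P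
  set s : Finset (Fin k) := Finset.univ.filter P with hsdef
  have hs : s.Nonempty := ⟨m0, Finset.mem_filter.2 ⟨Finset.mem_univ _, hP0⟩⟩
  set t := s.image b with ht
  have htne : t.Nonempty := hs.image b
  set m := t.max' htne with hm
  obtain ⟨m1, hm1s, hm1⟩ : ∃ m1 ∈ s, b m1 = m := Finset.mem_image.1 (t.max'_mem htne)
  have hPm1 : P m1 := (Finset.mem_filter.1 hm1s).2
  have him : i ≤ m := hm1 ▸ hPm1.1
  have hsub : Icc i m ⊆ ⋃ m', f m' := hm1 ▸ hPm1.2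
  have hmax : ∀ m', P m' → b m' ≤ m := fun m' h =>
    t.le_max' _ (Finset.mem_image.2 ⟨m', Finset.mem_filter.2 ⟨Finset.mem_univ _, h⟩, rfl⟩)
  have key : ∀ y, y ∈ (⋃ m', f m') → m < y → ∃ m', m < a m' ∧ a m' ≤ y := by
    intro y hy hmy
    obtain ⟨m', hym⟩ := mem_iUnion.1 hy
    rw [hab m'] at hym
    refine ⟨m', ?_, hym.1⟩
    by_contra ham
    push_neg at ham
    have hPm' : P m' := by
      refine ⟨him.trans (hmy.le.trans hym.2), fun x hx => ?_⟩
      rcases le_or_gt x m with hxm | hmx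
      · exact hsub ⟨hx.1, hxm⟩
      · exact mem_iUnion.2 ⟨m', by rw [hab m']; exact ⟨ham.trans hmx.le, hx.2⟩⟩
    exact absurd (hmax m' hPm') (not_le.2 (hmy.trans_le hym.2))
  refine ⟨m, him, hsub, hsub ⟨him, le_rfl⟩, ?_⟩
  set s2 : Finset (Fin k) := Finset.univ.filter (fun m' => m < a m') with hs2
  by_cases h2 : s2.Nonempty
  · refine ⟨(s2.image a).min' (h2.image a), ?_, ?_⟩
    · rw [Finset.lt_min'_iff]
      rintro x hx
      obtain ⟨m', hm's, rfl⟩ := Finset.mem_image.1 hx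
      exact (Finset.mem_filter.1 hm's).2
    · ext y
      simp only [mem_inter_iff, mem_Ioo, mem_empty_iff_false, iff_false, not_and]
      rintro ⟨hy1, hy2⟩ hyY
      obtain ⟨m', hma, hay⟩ := key y hyY hy1
      have : (s2.image a).min' (h2.image a) ≤ a m' :=
        Finset.min'_le _ _ (Finset.mem_image.2 ⟨m', Finset.mem_filter.2 ⟨Finset.mem_univ _, hma⟩, rfl⟩)
      exact absurd (this.trans hay) (not_le.2 hy2)
  · refine ⟨m + 1, lt_add_one m, ?_⟩
    ext y
    simp only [mem_inter_iff, mem_Ioo, mem_empty_iff_false, iff_false, not_and]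
    rintro ⟨hy1, hy2⟩ hyY
    obtain ⟨m', hma, -⟩ := key y hyY hy1
    exact h2 ⟨m', Finset.mem_filter.2 ⟨Finset.mem_univ _, hma⟩⟩


section Gen

def genU (F : Set II) (p q : II → II) : Set II := ⋃ i ∈ F, Icc (p i) (q i)

variable {F : Set II} {p q : II → II}

lemma mem_genU {x : II} : x ∈ genU F p q ↔ ∃ i ∈ F, x ∈ Icc (p i) (q i) := by
  simp only [genU, mem_iUnion, exists_prop]

lemma genU_isFCI (hF : F.Finite) : IsFCI (genU F p q) := by
  classical
  refine ⟨hF.toFinset.card, fun m =>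
    Icc (p ((hF.toFinset.equivFin.symm m) : II)) (q ((hF.toFinset.equivFin.symm m) : II)),
    fun m => Or.inl ⟨_, _, rfl⟩, ?_⟩
  ext x
  rw [mem_genU]
  simp only [mem_iUnion]
  constructor
  · rintro ⟨i, hi, hx⟩
    refine ⟨hF.toFinset.equivFin ⟨i, hF.mem_toFinset.2 hi⟩, ?_⟩
    rw [Equiv.symm_apply_apply]
    exact hx
  · rintro ⟨m, hx⟩
    exact ⟨_, hF.mem_toFinset.1 (hF.toFinset.equivFin.symm m).2, hx⟩

variable (hF : F.Finite) (hpq : ∀ i ∈ F, p i < q i)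
  (hsep : ∀ i ∈ F, ∀ j ∈ F, i < j → q i < p j)

include hpq hsep in
lemma mem_lSet_genU (hF : F.Finite) {i : II} (hiF : i ∈ F) : p i ∈ lSet (genU F p q) := by
  classical
  have hpiY : p i ∈ genU F p q := mem_genU.2 ⟨i, hiF, left_mem_Icc.2 (hpq i hiF).le⟩
  refine ⟨hpiY, ?_⟩
  by_cases h0 : p i = 0
  · exact Or.inl h0
  · refine Or.inr ?_
    have gapOf : ∀ lo : II, lo < p i → (∀ j ∈ F, j < i → q j ≤ lo) →
        Ioo lo (p i) ∩ genU F p q = ∅ := by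
      intro lo hlo hq
      ext y
      simp only [mem_inter_iff, mem_Ioo, mem_empty_iff_false, iff_false, not_and]
      rintro ⟨hy1, hy2⟩ hyY
      obtain ⟨j, hjF, hyj⟩ := mem_genU.1 hyY
      rcases lt_trichotomy j i with hji | rfl | hij
      · exact absurd ((hyj.2.trans (hq j hjF hji)).trans_lt hy1) (lt_irrefl y)
      · exact absurd (hyj.1.trans_lt hy2) (lt_irrefl _)
      · exact absurd (((hy2.trans_le (hpq i hiF).le).trans (hsep i hiF j hjF hij)).trans_le hyj.1)
          (lt_irrefl y)
    by_cases hne : (hF.toFinset.filter (· < i)).Nonempty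
    · have hjpmem := Finset.max'_mem _ hne
      rw [Finset.mem_filter, hF.mem_toFinset] at hjpmem
      have hqlt : q ((hF.toFinset.filter (· < i)).max' hne) < p i :=
        hsep _ hjpmem.1 i hiF hjpmem.2
      refine ⟨_, hqlt, gapOf _ hqlt ?_⟩
      intro j hjF hji
      have hjPf : j ∈ hF.toFinset.filter (· < i) := by
        rw [Finset.mem_filter, hF.mem_toFinset]; exact ⟨hjF, hji⟩
      rcases eq_or_lt_of_le (Finset.le_max' _ j hjPf) with h | h
      · rw [h]
      · exact ((hsep j hjF _ hjpmem.1 h).trans_le (hpq _ hjpmem.1).le).le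
    · refine ⟨0, zero_le.lt_of_ne (Ne.symm h0), gapOf _ (zero_le.lt_of_ne (Ne.symm h0)) ?_⟩
      intro j hjF hji
      exact absurd ⟨j, by rw [Finset.mem_filter, hF.mem_toFinset]; exact ⟨hjF, hji⟩⟩ hne

include hpq hsep in
lemma lSet_genU (hF : F.Finite) : lSet (genU F p q) = p '' F := by
  ext x
  constructor
  · intro hx
    obtain ⟨j, hjF, hxj⟩ := mem_genU.1 hx.1
    rcases eq_or_lt_of_le hxj.1 with h | h
    · exact ⟨j, hjF, h⟩
    · exact absurd hx (not_mem_lSet_of_interior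
        (fun y hy => mem_genU.2 ⟨j, hjF, ⟨hy.1, hy.2.trans hxj.2⟩⟩) h)
  · rintro ⟨i, hiF, rfl⟩
    exact mem_lSet_genU hpq hsep hF hiF

include hpq hsep in
lemma mem_rSet_genU (hF : F.Finite) {i : II} (hiF : i ∈ F) : q i ∈ rSet (genU F p q) := by
  classical
  have hqiY : q i ∈ genU F p q := mem_genU.2 ⟨i, hiF, right_mem_Icc.2 (hpq i hiF).le⟩
  refine ⟨hqiY, ?_⟩
  have gapOf : ∀ hi' : II, q i < hi' → (∀ j ∈ F, i < j → hi' ≤ p j) →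
      Ioo (q i) hi' ∩ genU F p q = ∅ := by
    intro hi' hlt hp
    ext y
    simp only [mem_inter_iff, mem_Ioo, mem_empty_iff_false, iff_false, not_and]
    rintro ⟨hy1, hy2⟩ hyY
    obtain ⟨j, hjF, hyj⟩ := mem_genU.1 hyY
    rcases lt_trichotomy j i with hji | rfl | hij
    · exact absurd ((hyj.2.trans_lt (hsep j hjF i hiF hji)).trans_le
        ((hpq i hiF).le.trans hy1.le)) (lt_irrefl y)
    · exact absurd (hy1.trans_le hyj.2) (lt_irrefl _)
    · exact absurd ((hy2.trans_le (hp j hjF hij)).trans_le hyj.1) (lt_irrefl y)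
  by_cases hne : (hF.toFinset.filter (i < ·)).Nonempty
  · have hjnmem := Finset.min'_mem _ hne
    rw [Finset.mem_filter, hF.mem_toFinset] at hjnmem
    have hlt : q i < p ((hF.toFinset.filter (i < ·)).min' hne) :=
      hsep i hiF _ hjnmem.1 hjnmem.2
    refine ⟨_, hlt, gapOf _ hlt ?_⟩
    intro j hjF hij
    have hjSf : j ∈ hF.toFinset.filter (i < ·) := by
      rw [Finset.mem_filter, hF.mem_toFinset]; exact ⟨hjF, hij⟩
    rcases eq_or_lt_of_le (Finset.min'_le _ j hjSf) with h | h
    · rw [← h]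
    · exact ((hpq _ hjnmem.1).le.trans (hsep _ hjnmem.1 j hjF h).le)
  · refine ⟨q i + 1, lt_add_one _, gapOf _ (lt_add_one _) ?_⟩
    intro j hjF hij
    exact absurd ⟨j, by rw [Finset.mem_filter, hF.mem_toFinset]; exact ⟨hjF, hij⟩⟩ hne

include hpq hsep in
lemma rSet_genU (hF : F.Finite) : rSet (genU F p q) = q '' F := by
  ext x
  constructor
  · intro hx
    obtain ⟨j, hjF, hxj⟩ := mem_genU.1 hx.1
    rcases eq_or_lt_of_le hxj.2 with h | h
    · exact ⟨j, hjF, h.symm⟩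
    · exact absurd hx (not_mem_rSet_of_interior
        (fun y hy => mem_genU.2 ⟨j, hjF, ⟨hxj.1.trans hy.1, hy.2⟩⟩) h)
  · rintro ⟨i, hiF, rfl⟩
    exact mem_rSet_genU hpq hsep hF hiF

include hpq hsep in
lemma maxSet_genU (hF : F.Finite) (h : {i ∈ genU F p q | ∀ j ∈ genU F p q, j ≤ i} = ∅) :
    genU F p q = ∅ := by
  classical
  by_contra hne
  obtain ⟨x, hx⟩ := nonempty_iff_ne_empty.2 hne
  obtain ⟨i1, hi1F, -⟩ := mem_genU.1 hx
  have hFne : hF.toFinset.Nonempty := ⟨i1, hF.mem_toFinset.2 hi1F⟩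
  have hi0F : hF.toFinset.max' hFne ∈ F := hF.mem_toFinset.1 (hF.toFinset.max'_mem hFne)
  have : q (hF.toFinset.max' hFne) ∈ {i ∈ genU F p q | ∀ j ∈ genU F p q, j ≤ i} := by
    refine ⟨mem_genU.2 ⟨_, hi0F, right_mem_Icc.2 (hpq _ hi0F).le⟩, ?_⟩
    intro y hy
    obtain ⟨j, hjF, hyj⟩ := mem_genU.1 hy
    rcases eq_or_lt_of_le (hF.toFinset.le_max' j (hF.mem_toFinset.2 hjF)) with hj | hj
    · rw [hj] at hyj; exact hyj.2
    · exact hyj.2.trans ((hsep j hjF _ hi0F hj).trans_le (hpq _ hi0F).le).le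
  rw [h] at this
  exact this

lemma genU_inter {S : Set II} (g : II → II)
    (hg : ∀ i ∈ F, Icc (p i) (q i) ∩ S = {g i}) : genU F p q ∩ S = g '' F := by
  ext x
  constructor
  · rintro ⟨hx, hxS⟩
    obtain ⟨i, hiF, hxi⟩ := mem_genU.1 hx
    have : x ∈ ({g i} : Set II) := (hg i hiF) ▸ (⟨hxi, hxS⟩ : x ∈ Icc (p i) (q i) ∩ S)
    exact ⟨i, hiF, this.symm⟩
  · rintro ⟨i, hiF, rfl⟩
    have : g i ∈ Icc (p i) (q i) ∩ S := (hg i hiF) ▸ rfl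
    exact ⟨mem_genU.2 ⟨i, hiF, this.1⟩, this.2⟩

end Gen


/-- All the set-level conditions expressed by the quantifier-free matrix. -/
def Conds (A B C y z y' z' : Set II) : Prop :=
  (lSet y = C) ∧ (y ∩ A = C) ∧ (lSet y ∩ rSet y = ∅) ∧ (lSet z = rSet y) ∧
  (z ∩ A = rSet z) ∧ (rSet z ∩ B = rSet z) ∧ (lSet z ∩ rSet z = ∅) ∧
  (maxSet y = ∅ → y = ∅) ∧ (maxSet z = ∅ → z = ∅) ∧
  (lSet y' ∩ C = ∅) ∧ (lSet y' ∪ (C ∪ maxSet A) = A) ∧ (y' ∩ A = lSet y') ∧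
  (lSet y' ∩ rSet y' = ∅) ∧ (lSet z' = rSet y') ∧ (z' ∩ A = rSet z') ∧
  (rSet z' ∩ B = ∅) ∧ (lSet z' ∩ rSet z' = ∅) ∧
  (maxSet y' = ∅ → y' = ∅) ∧ (maxSet z' = ∅ → z' = ∅)

lemma sound_core {A Y Z : Set II} (hY : IsFCI Y) (hZ : IsFCI Z)
    (hYA : Y ∩ A ⊆ lSet Y) (hZA : Z ∩ A = rSet Z)
    (h4 : lSet Y ∩ rSet Y = ∅) (h5 : lSet Z = rSet Y) (h8 : lSet Z ∩ rSet Z = ∅)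
    (h9 : maxSet Y = ∅ → Y = ∅) (h10 : maxSet Z = ∅ → Z = ∅)
    {i : II} (hi : i ∈ lSet Y) :
    ∃ j, j ∈ A ∧ i < j ∧ (∀ k ∈ A, i < k → j ≤ k) ∧ j ∈ rSet Z := by
  have hiY : i ∈ Y := hi.1
  obtain ⟨m, him, hImY, hmr⟩ := exists_right_end hY (bound_of_maxCond h9 hiY) hiY
  have hmi : i < m := by
    rcases eq_or_lt_of_le him with h | h
    · exfalso
      have : i ∈ lSet Y ∩ rSet Y := ⟨hi, h ▸ hmr⟩
      rw [h4] at this; exact this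
    · exact h
  have hmlZ : m ∈ lSet Z := h5.symm ▸ hmr
  have hmZ : m ∈ Z := hmlZ.1
  obtain ⟨j, hmj, hImZ, hjr⟩ := exists_right_end hZ (bound_of_maxCond h10 hmZ) hmZ
  have hmj' : m < j := by
    rcases eq_or_lt_of_le hmj with h | h
    · exfalso
      have : m ∈ lSet Z ∩ rSet Z := ⟨hmlZ, h ▸ hjr⟩
      rw [h8] at this; exact this
    · exact h
  have hjA : j ∈ A := by
    have : j ∈ Z ∩ A := hZA.symm ▸ hjr
    exact this.2
  refine ⟨j, hjA, hmi.trans hmj', ?_, hjr⟩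
  intro k hkA hik
  by_contra hkj
  push_neg at hkj
  rcases le_or_gt k m with hkm | hmk
  · have hkY : k ∈ Y := hImY ⟨hik.le, hkm⟩
    exact not_mem_lSet_of_interior (fun x hx => hImY ⟨hx.1, hx.2.trans hkm⟩) hik
      (hYA ⟨hkY, hkA⟩)
  · have hkZ : k ∈ rSet Z := by
      rw [← hZA]; exact ⟨hImZ ⟨hmk.le, hkj.le⟩, hkA⟩
    exact not_mem_rSet_of_interior (fun x hx => hImZ ⟨hmk.le.trans hx.1, hx.2⟩) hkj hkZ

lemma soundness {A B C y z y' z' : Set II} (hy : IsFCI y) (hz : IsFCI z)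
    (hy' : IsFCI y') (hz' : IsFCI z') (hc : Conds A B C y z y' z') :
    sInvSet A B = C := by
  obtain ⟨h1, h3, h4, h5, h6, h7, h8, h9, h10, h11, h12, h13, h14, h15, h16, h17, h18, h19, h20⟩ := hc
  ext i
  constructor
  · -- sInvSet ⊆ C
    rintro ⟨hiA, j0, hj0A, hij0, hj0min, hj0B⟩
    by_contra hiC
    have hily' : i ∈ lSet y' := by
      have : i ∈ lSet y' ∪ (C ∪ maxSet A) := h12.symm ▸ hiA
      rcases this with h | h | h
      · exact h
      · exact absurd h hiC
      · exact absurd (h.2 j0 hj0A) (not_le.2 hij0)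
    obtain ⟨j, hjA, hij, hjmin, hjr⟩ :=
      sound_core hy' hz' (le_of_eq h13) h16 h14 h15 h18 h19 h20 hily'
    have hjj0 : j = j0 := le_antisymm (hjmin j0 hj0A hij0) (hj0min j hjA hij)
    have : j ∈ rSet z' ∩ B := ⟨hjr, hjj0 ▸ hj0B⟩
    rw [h17] at this; exact this
  · -- C ⊆ sInvSet
    intro hiC
    have hily : i ∈ lSet y := h1.symm ▸ hiC
    have hiA : i ∈ A := (h3.symm ▸ hiC : i ∈ y ∩ A).2
    obtain ⟨j, hjA, hij, hjmin, hjr⟩ :=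
      sound_core hy hz (by rw [h3, ← h1]) h6 h4 h5 h8 h9 h10 hily
    have hjB : j ∈ B := (h7.symm ▸ hjr : j ∈ rSet z ∩ B).2
    exact ⟨hiA, j, hjA, hij, hjmin, hjB⟩


lemma completeness {A B C : Set II} (hA : A.Finite) (hsv : sInvSet A B = C) :
    ∃ y z y' z' : Set II, IsFCI y ∧ IsFCI z ∧ IsFCI y' ∧ IsFCI z' ∧ Conds A B C y z y' z' := by
  classical
  have hCA : C ⊆ A := by rintro i hi; rw [← hsv] at hi; exact hi.1
  -- successor function on A
  have hsex : ∀ i : II, ∃ si : II,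
      ((∃ j ∈ A, i < j) → si ∈ A ∧ i < si ∧ ∀ k ∈ A, i < k → si ≤ k) := by
    intro i
    by_cases h : ∃ j ∈ A, i < j
    · obtain ⟨j, hjA, hij⟩ := h
      have htne : (hA.toFinset.filter (i < ·)).Nonempty :=
        ⟨j, by rw [Finset.mem_filter, hA.mem_toFinset]; exact ⟨hjA, hij⟩⟩
      have hmm := Finset.min'_mem _ htne
      rw [Finset.mem_filter, hA.mem_toFinset] at hmm
      refine ⟨(hA.toFinset.filter (i < ·)).min' htne, fun _ => ⟨hmm.1, hmm.2, ?_⟩⟩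
      intro k hkA hik
      exact Finset.min'_le _ k (by rw [Finset.mem_filter, hA.mem_toFinset]; exact ⟨hkA, hik⟩)
    · exact ⟨0, fun hc => absurd hc h⟩
  choose s hs using hsex
  have hmidex : ∀ i : II, ∃ m : II, ((∃ j ∈ A, i < j) → i < m ∧ m < s i) := by
    intro i
    by_cases h : ∃ j ∈ A, i < j
    · obtain ⟨m, hm1, hm2⟩ := exists_between (hs i h).2.1
      exact ⟨m, fun _ => ⟨hm1, hm2⟩⟩
    · exact ⟨0, fun hc => absurd hc h⟩
  choose mid hmid using hmidex
  set D : Set II := {i : II | i ∈ A ∧ i ∉ C ∧ ∃ j ∈ A, i < j} with hD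
  have hDA : D ⊆ A := fun i hi => hi.1
  have hDfin : D.Finite := hA.subset hDA
  have hCfin : C.Finite := hA.subset hCA
  have hCex : ∀ i ∈ C, ∃ j ∈ A, i < j := by
    intro i hi
    rw [← hsv] at hi
    obtain ⟨-, j, hjA, hij, -⟩ := hi
    exact ⟨j, hjA, hij⟩
  have hCs : ∀ i ∈ C, s i ∈ B := by
    intro i hi
    have hex := hCex i hi
    rw [← hsv] at hi
    obtain ⟨-, j, hjA, hij, hjmin, hjB⟩ := hi
    have h1 := hs i hex
    have : s i = j := le_antisymm (h1.2.2 j hjA hij) (hjmin (s i) h1.1 h1.2.1)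
    rw [this]; exact hjB
  have hDs : ∀ i ∈ D, s i ∉ B := by
    intro i hi hB
    have h1 := hs i hi.2.2
    have : i ∈ sInvSet A B := ⟨hi.1, s i, h1.1, h1.2.1, h1.2.2, hB⟩
    rw [hsv] at this
    exact hi.2.1 this
  -- the generic package
  have pack : ∀ F : Set II, F.Finite → F ⊆ A → (∀ i ∈ F, ∃ j ∈ A, i < j) →
      (lSet (genU F id mid) = F) ∧ (rSet (genU F id mid) = mid '' F) ∧
      (lSet (genU F mid s) = mid '' F) ∧ (rSet (genU F mid s) = s '' F) ∧
      (genU F id mid ∩ A = F) ∧ (genU F mid s ∩ A = s '' F) ∧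
      (lSet (genU F id mid) ∩ rSet (genU F id mid) = ∅) ∧
      (lSet (genU F mid s) ∩ rSet (genU F mid s) = ∅) ∧
      (maxSet (genU F id mid) = ∅ → genU F id mid = ∅) ∧
      (maxSet (genU F mid s) = ∅ → genU F mid s = ∅) ∧
      IsFCI (genU F id mid) ∧ IsFCI (genU F mid s) := by
    intro F hF hFA hFex
    have hq1 : ∀ i ∈ F, (id i : II) < mid i := fun i hi => (hmid i (hFex i hi)).1
    have hq2 : ∀ i ∈ F, mid i < s i := fun i hi => (hmid i (hFex i hi)).2
    have hsle : ∀ i ∈ F, ∀ k ∈ A, i < k → s i ≤ k := fun i hi => (hs i (hFex i hi)).2.2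
    have hsA : ∀ i ∈ F, s i ∈ A := fun i hi => (hs i (hFex i hi)).1
    have hsep1 : ∀ i ∈ F, ∀ j ∈ F, i < j → mid i < id j :=
      fun i hi j hj hij => (hq2 i hi).trans_le (hsle i hi j (hFA hj) hij)
    have hsep2 : ∀ i ∈ F, ∀ j ∈ F, i < j → s i < mid j :=
      fun i hi j hj hij => (hsle i hi j (hFA hj) hij).trans_lt (hq1 j hj)
    have hmidA : ∀ i ∈ F, mid i ∉ A := by
      intro i hi hmA
      exact absurd (hsle i hi (mid i) hmA (hq1 i hi)) (not_le.2 (hq2 i hi))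
    have hIY : ∀ i ∈ F, Icc (id i) (mid i) ∩ A = {(fun x => x) i} := by
      intro i hi
      ext x
      simp only [mem_inter_iff, mem_Icc, mem_singleton_iff, id]
      constructor
      · rintro ⟨⟨hix, hxm⟩, hxA⟩
        rcases eq_or_lt_of_le hix with h | h
        · exact h.symm
        · exact absurd ((hsle i hi x hxA h).trans hxm) (not_le.2 (hq2 i hi))
      · rintro rfl
        exact ⟨⟨le_rfl, (hq1 _ hi).le⟩, hFA hi⟩
    have hIZ : ∀ i ∈ F, Icc (mid i) (s i) ∩ A = {s i} := by
      intro i hi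
      ext x
      simp only [mem_inter_iff, mem_Icc, mem_singleton_iff]
      constructor
      · rintro ⟨⟨hmx, hxs⟩, hxA⟩
        rcases eq_or_lt_of_le hxs with h | h
        · exact h
        · exact absurd (hsle i hi x hxA ((hq1 i hi).trans_le hmx)) (not_le.2 h)
      · rintro rfl
        exact ⟨⟨(hq2 i hi).le, le_rfl⟩, hsA i hi⟩
    have P1 : lSet (genU F id mid) = F := by rw [lSet_genU hq1 hsep1 hF, image_id]
    have P2 : rSet (genU F id mid) = mid '' F := rSet_genU hq1 hsep1 hF
    have P3 : lSet (genU F mid s) = mid '' F := lSet_genU hq2 hsep2 hF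
    have P4 : rSet (genU F mid s) = s '' F := rSet_genU hq2 hsep2 hF
    have P5 : genU F id mid ∩ A = F := by
      rw [genU_inter (fun x => x) hIY, image_id']
    have P6 : genU F mid s ∩ A = s '' F := genU_inter s hIZ
    have P7 : lSet (genU F id mid) ∩ rSet (genU F id mid) = ∅ := by
      rw [P1, P2]
      ext x
      simp only [mem_inter_iff, mem_image, mem_empty_iff_false, iff_false, not_and]
      rintro hxF ⟨i, hiF, rfl⟩
      exact hmidA i hiF (hFA hxF)
    have P8 : lSet (genU F mid s) ∩ rSet (genU F mid s) = ∅ := by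
      rw [P3, P4]
      ext x
      simp only [mem_inter_iff, mem_image, mem_empty_iff_false, iff_false, not_and]
      rintro ⟨i, hiF, rfl⟩ ⟨j, hjF, hj⟩
      exact hmidA i hiF (hj ▸ hsA j hjF)
    exact ⟨P1, P2, P3, P4, P5, P6, P7, P8, maxSet_genU hq1 hsep1 hF, maxSet_genU hq2 hsep2 hF,
      genU_isFCI hF, genU_isFCI hF⟩
  have hDex : ∀ i ∈ D, ∃ j ∈ A, i < j := fun i hi => hi.2.2
  obtain ⟨C1, C2, C3, C4, C5, C6, C7, C8, C9, C10, C11, C12⟩ := pack C hCfin hCA hCex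
  obtain ⟨D1, D2, D3, D4, D5, D6, D7, D8, D9, D10, D11, D12⟩ := pack D hDfin hDA hDex
  refine ⟨genU C id mid, genU C mid s, genU D id mid, genU D mid s, C11, C12, D11, D12,
    C1, C5, C7, C3.trans C2.symm, C6.trans C4.symm, ?_, C8, C9, C10,
    ?_, ?_, D5.trans D1.symm, D7, D3.trans D2.symm, D6.trans D4.symm, ?_, D8, D9, D10⟩
  · -- rSet Z ∩ B = rSet Z
    rw [C4]
    refine inter_eq_left.2 ?_
    rintro x ⟨i, hi, rfl⟩
    exact hCs i hi
  · -- lSet Y' ∩ C = ∅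
    rw [D1]
    ext x
    simp only [mem_inter_iff, mem_empty_iff_false, iff_false, not_and]
    intro hxD hxC
    exact hxD.2.1 hxC
  · -- lSet Y' ∪ (C ∪ maxSet A) = A
    rw [D1]
    ext x
    constructor
    · rintro (h | h | h)
      · exact h.1
      · exact hCA h
      · exact h.1
    · intro hxA
      by_cases hxC : x ∈ C
      · exact Or.inr (Or.inl hxC)
      · by_cases hex : ∃ j ∈ A, x < j
        · exact Or.inl ⟨hxA, hxC, hex⟩
        · push_neg at hex
          exact Or.inr (Or.inr ⟨hxA, hex⟩)
  · -- rSet Z' ∩ B = ∅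
    rw [D4]
    ext x
    simp only [mem_inter_iff, mem_image, mem_empty_iff_false, iff_false, not_and]
    rintro ⟨i, hi, rfl⟩ hB
    exact hDs i hi hB

end SInvAux


namespace SInvAux

open FirstOrder Language BoundedFormula

@[simp] lemma funMap_union_val (v : Fin 2 → FCI) :
    (funMap (L := LL) LLFunc.union v).1 = (v 0).1 ∪ (v 1).1 := rfl
@[simp] lemma funMap_inter_val (v : Fin 2 → FCI) :
    (funMap (L := LL) LLFunc.inter v).1 = (v 0).1 ∩ (v 1).1 := rfl
@[simp] lemma funMap_bot_val (v : Fin 0 → FCI) :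
    (funMap (L := LL) LLFunc.bot v).1 = (∅ : Set II) := rfl
@[simp] lemma funMap_max_val (v : Fin 1 → FCI) :
    (funMap (L := LL) LLFunc.max v).1 = maxSet (v 0).1 := rfl
@[simp] lemma funMap_left_val (v : Fin 1 → FCI) :
    (funMap (L := LL) LLFunc.left v).1 = lSet (v 0).1 := rfl
@[simp] lemma funMap_right_val (v : Fin 1 → FCI) :
    (funMap (L := LL) LLFunc.right v).1 = rSet (v 0).1 := rfl

abbrev TT := LL.Term (Fin 3 ⊕ Fin 4)

def vA : TT := Term.var (Sum.inl 0)
def vB : TT := Term.var (Sum.inl 1)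
def vC : TT := Term.var (Sum.inl 2)
def vY : TT := Term.var (Sum.inr 0)
def vZ : TT := Term.var (Sum.inr 1)
def vY2 : TT := Term.var (Sum.inr 2)
def vZ2 : TT := Term.var (Sum.inr 3)
def tun (t s : TT) : TT := Term.func LLFunc.union ![t, s]
def tin (t s : TT) : TT := Term.func LLFunc.inter ![t, s]
def tbot : TT := Term.func LLFunc.bot ![]
def tmax (t : TT) : TT := Term.func LLFunc.max ![t]
def tlf (t : TT) : TT := Term.func LLFunc.left ![t]
def trt (t : TT) : TT := Term.func LLFunc.right ![t]

def eqf (t s : TT) : LL.BoundedFormula (Fin 3) 4 := t.bdEqual s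

/-- The quantifier-free matrix of the formula. -/
def theta : LL.BoundedFormula (Fin 3) 4 :=
  (eqf (tlf vY) vC) ⊓ (eqf (tin vY vA) vC) ⊓ (eqf (tin (tlf vY) (trt vY)) tbot) ⊓
  (eqf (tlf vZ) (trt vY)) ⊓ (eqf (tin vZ vA) (trt vZ)) ⊓ (eqf (tin (trt vZ) vB) (trt vZ)) ⊓
  (eqf (tin (tlf vZ) (trt vZ)) tbot) ⊓
  ((eqf (tmax vY) tbot).imp (eqf vY tbot)) ⊓ ((eqf (tmax vZ) tbot).imp (eqf vZ tbot)) ⊓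
  (eqf (tin (tlf vY2) vC) tbot) ⊓ (eqf (tun (tlf vY2) (tun vC (tmax vA))) vA) ⊓
  (eqf (tin vY2 vA) (tlf vY2)) ⊓ (eqf (tin (tlf vY2) (trt vY2)) tbot) ⊓
  (eqf (tlf vZ2) (trt vY2)) ⊓ (eqf (tin vZ2 vA) (trt vZ2)) ⊓
  (eqf (tin (trt vZ2) vB) tbot) ⊓ (eqf (tin (tlf vZ2) (trt vZ2)) tbot) ⊓
  ((eqf (tmax vY2) tbot).imp (eqf vY2 tbot)) ⊓ ((eqf (tmax vZ2) tbot).imp (eqf vZ2 tbot))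

/-- The existential formula. -/
def phi : LL.Formula (Fin 3) := theta.ex.ex.ex.ex

lemma isQF_inf {n : ℕ} {φ ψ : LL.BoundedFormula (Fin 3) n} (h1 : φ.IsQF) (h2 : ψ.IsQF) :
    (φ ⊓ ψ).IsQF := (h1.imp (h2.imp isQF_bot)).imp isQF_bot

lemma eqf_isQF (t s : TT) : (eqf t s).IsQF := (IsAtomic.equal t s).isQF

lemma theta_isQF : theta.IsQF := by
  unfold theta
  repeat' apply isQF_inf
  all_goals first
    | exact eqf_isQF _ _
    | exact (eqf_isQF _ _).imp (eqf_isQF _ _)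

lemma phi_isExist : IsExist phi := .ex (.ex (.ex (.ex (.of_isQF theta_isQF))))

lemma realize_theta (v : Fin 3 → FCI) (xs : Fin 4 → FCI) :
    theta.Realize v xs ↔
      Conds (v 0).1 (v 1).1 (v 2).1 (xs 0).1 (xs 1).1 (xs 2).1 (xs 3).1 := by
  simp only [theta, eqf, Conds, realize_inf, realize_imp, BoundedFormula.realize_bdEqual,
    Term.realize_func, Term.realize_var, Sum.elim_inl, Sum.elim_inr,
    tlf, trt, tin, tun, tmax, tbot, vA, vB, vC, vY, vZ, vY2, vZ2,
    Subtype.ext_iff, funMap_union_val, funMap_inter_val, funMap_bot_val,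
    funMap_max_val, funMap_left_val, funMap_right_val,
    Matrix.cons_val_zero, Matrix.cons_val_one, Matrix.head_cons]
  tauto

lemma snoc4 (a b c d : FCI) :
    (Fin.snoc (Fin.snoc (Fin.snoc (Fin.snoc (default : Fin 0 → FCI) a) b) c) d
      : Fin 4 → FCI) = ![a, b, c, d] := by
  funext i
  fin_cases i <;> rfl

lemma realize_phi (v : Fin 3 → FCI) :
    phi.Realize v ↔ ∃ y z y2 z2 : FCI,
      Conds (v 0).1 (v 1).1 (v 2).1 y.1 z.1 y2.1 z2.1 := by
  unfold phi Formula.Realize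
  simp only [realize_ex]
  constructor
  · rintro ⟨a, b, c, d, h⟩
    exact ⟨_, _, _, _, (realize_theta v _).1 h⟩
  · rintro ⟨a, b, c, d, h⟩
    refine ⟨a, b, c, d, (realize_theta v _).2 ?_⟩
    rw [snoc4]
    simpa using h

end SInvAux

universe u v

/-- There is an existential `L_L`-formula `φ(X,Y,Z)` such that for all
finite subsets `A, B, C` of `𝕀`: `L(𝕀) ⊨ φ(A,B,C)` if and only if `𝔰⁻¹(A,B) = C`. -/
theorem sInv_existentially_definable :
    ∃ φ : LL.Formula (Fin 3), IsExist φ ∧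
      ∀ (A B C : Set II) (hA : A.Finite) (hB : B.Finite) (hC : C.Finite),
        (φ.Realize (![⟨A, finite_isFCI hA⟩, ⟨B, finite_isFCI hB⟩, ⟨C, finite_isFCI hC⟩] : Fin 3 → FCI) ↔
          sInvSet A B = C) := by
  refine ⟨SInvAux.phi, SInvAux.phi_isExist, ?_⟩
  intro A B C hA hB hC
  rw [SInvAux.realize_phi]
  constructor
  · rintro ⟨y, z, y2, z2, h⟩
    exact SInvAux.soundness y.2 z.2 y2.2 z2.2 h
  · intro h
    obtain ⟨y, z, y2, z2, hy, hz, hy2, hz2, hc⟩ := SInvAux.completeness hA h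
    exact ⟨⟨y, hy⟩, ⟨z, hz⟩, ⟨y2, hy2⟩, ⟨z2, hz2⟩, hc⟩

end MCpaper
end

section
/- There exists an L_WSO-formula φ_⊆(X_l, X_r, Y_l, Y_r) such that for all A, B ∈ P_fci(𝕀): A ⊆ B if and only if WSO(𝕀) ⊨ φ_⊆(l(A), r(A), l(B), r(B)). -/
namespace MCpaper

open FirstOrder Language Structure Set

/-! ### Auxiliary: membership characterization via endpoints -/

lemma mem_fci_iff {A : Set II} (hA : IsFCI A) (x : II) :
    x ∈ A ↔ ∃ a ∈ lSet A, a ≤ x ∧ ∀ b ∈ rSet A, ¬(a ≤ b ∧ b < x) := by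
  obtain ⟨k, f, hf, rfl⟩ := hA
  constructor
  · intro hx
    set W : Set II :=
      {i | i ≤ x ∧ Set.Icc i x ⊆ (⋃ m, f m) ∧ ∃ m, i ∈ f m ∧ ∀ t ∈ f m, i ≤ t} with hW
    have hWfin : W.Finite := by
      have hsub : W ⊆ ⋃ m, minSet (f m) := by
        rintro i ⟨-, -, m, him, hmin⟩
        exact Set.mem_iUnion.2 ⟨m, him, hmin⟩
      exact (Set.finite_iUnion fun m => (minSet_subsingleton (f m)).finite).subset hsub
    have hWne : W.Nonempty := by
      obtain ⟨m, hm⟩ := Set.mem_iUnion.1 hx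
      rcases hf m with ⟨i, j, hij⟩ | ⟨i, hi⟩
      · rw [hij] at hm
        refine ⟨i, hm.1, fun t ht => Set.mem_iUnion.2 ⟨m, ?_⟩, m, ?_, ?_⟩
        · rw [hij]; exact ⟨ht.1, ht.2.trans hm.2⟩
        · rw [hij]; exact ⟨le_refl i, hm.1.trans hm.2⟩
        · rw [hij]; exact fun t ht => ht.1
      · rw [hi] at hm
        refine ⟨i, hm, fun t ht => Set.mem_iUnion.2 ⟨m, ?_⟩, m, ?_, ?_⟩
        · rw [hi]; exact ht.1
        · rw [hi]; exact le_refl i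
        · rw [hi]; exact fun t ht => ht
    obtain ⟨a, haW, hamin⟩ := Set.exists_min_image W id hWfin hWne
    obtain ⟨hax, haIcc, -⟩ := haW
    have haA : a ∈ ⋃ m, f m := haIcc ⟨le_refl a, hax⟩
    have key : ∀ m i j, f m = Set.Icc i j → i < a → i ≤ j → j < a := by
      intro m i j hm hia hij
      by_contra hja
      push_neg at hja
      have hiW : i ∈ W := by
        refine ⟨hia.le.trans hax, fun t ht => ?_, m, ?_, ?_⟩
        · rcases le_or_gt t j with h | h
          · exact Set.mem_iUnion.2 ⟨m, by rw [hm]; exact ⟨ht.1, h⟩⟩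
          · exact haIcc ⟨hja.trans h.le, ht.2⟩
        · rw [hm]; exact ⟨le_refl i, hij⟩
        · rw [hm]; exact fun t ht => ht.1
      have h := hamin i hiW
      simp only [id] at h
      exact absurd hia (not_lt.2 h)
    have keyIci : ∀ m i, f m = Set.Ici i → i < a → False := by
      intro m i hm hia
      have hiW : i ∈ W := by
        refine ⟨hia.le.trans hax,
          fun t ht => Set.mem_iUnion.2 ⟨m, by rw [hm]; exact ht.1⟩,
          m, by rw [hm]; exact le_refl i, by rw [hm]; exact fun t ht => ht⟩
      have h := hamin i hiW
      simp only [id] at h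
      exact absurd hia (not_lt.2 h)
    have haL : a ∈ lSet (⋃ m, f m) := by
      refine ⟨haA, ?_⟩
      rcases eq_or_ne a 0 with h0 | h0
      · exact Or.inl h0
      · right
        have hapos : 0 < a := lt_of_le_of_ne zero_le (Ne.symm h0)
        set RE : Set II := insert 0 {j | ∃ m i, f m = Set.Icc i j ∧ i ≤ j ∧ j < a} with hRE
        have hREfin : RE.Finite := by
          refine Set.Finite.insert 0 ?_
          have hsub : {j | ∃ m i, f m = Set.Icc i j ∧ i ≤ j ∧ j < a} ⊆ ⋃ m, maxSet (f m) := by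
            rintro j ⟨m, i, hm, hij, -⟩
            refine Set.mem_iUnion.2 ⟨m, ?_⟩
            rw [hm]
            exact ⟨⟨hij, le_refl j⟩, fun t ht => ht.2⟩
          exact ((Set.finite_iUnion fun m => (maxSet_subsingleton (f m)).finite)).subset hsub
        obtain ⟨i', hi'RE, hi'max⟩ :=
          Set.exists_max_image RE id hREfin ⟨0, Set.mem_insert 0 _⟩
        have hi'a : i' < a := by
          rcases hi'RE with h | ⟨m, i, hm, hij, hja⟩
          · rw [h]; exact hapos
          · exact hja
        refine ⟨i', hi'a, ?_⟩
        ext t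
        simp only [Set.mem_inter_iff, Set.mem_Ioo, Set.mem_empty_iff_false, iff_false, not_and]
        rintro ⟨hti', hta⟩ htA
        obtain ⟨m, htm⟩ := Set.mem_iUnion.1 htA
        rcases hf m with ⟨i, j, hij⟩ | ⟨i, hi⟩
        · rw [hij] at htm
          have hia : i < a := lt_of_le_of_lt htm.1 hta
          have hja : j < a := key m i j hij hia (htm.1.trans htm.2)
          have hjRE : j ∈ RE := Set.mem_insert_iff.2 (Or.inr ⟨m, i, hij, htm.1.trans htm.2, hja⟩)
          have := hi'max j hjRE
          simp only [id] at this
          exact absurd (htm.2.trans this) (not_le.2 hti')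
        · rw [hi] at htm
          exact keyIci m i hi (lt_of_le_of_lt htm hta)
    refine ⟨a, haL, hax, ?_⟩
    rintro b ⟨hbA, i'', hbi'', hgap⟩ ⟨hab, hbx⟩
    obtain ⟨y, hy1, hy2⟩ := exists_between (lt_min hbi'' hbx)
    have hyA : y ∈ ⋃ m, f m :=
      haIcc ⟨hab.trans hy1.le, (hy2.trans_le (min_le_right _ _)).le⟩
    have hmem : y ∈ Set.Ioo b i'' ∩ ⋃ m, f m :=
      ⟨⟨hy1, hy2.trans_le (min_le_left _ _)⟩, hyA⟩
    rw [hgap] at hmem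
    exact hmem
  · rintro ⟨a, haL, hax, hnb⟩
    by_contra hx
    have haA : a ∈ ⋃ m, f m := haL.1
    have hax' : a < x := lt_of_le_of_ne hax (fun h => hx (h ▸ haA))
    set E : Set II := {j | j ∈ (⋃ m, f m) ∧ a ≤ j ∧ j < x ∧ ∃ m, j ∈ f m ∧ ∀ t ∈ f m, t ≤ j}
      with hE
    have hEfin : E.Finite := by
      have hsub : E ⊆ ⋃ m, maxSet (f m) := by
        rintro j ⟨-, -, -, m, hjm, hmax⟩
        exact Set.mem_iUnion.2 ⟨m, hjm, hmax⟩
      exact (Set.finite_iUnion fun m => (maxSet_subsingleton (f m)).finite).subset hsub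
    have hEne : E.Nonempty := by
      obtain ⟨m, hm⟩ := Set.mem_iUnion.1 haA
      rcases hf m with ⟨i, j, hij⟩ | ⟨i, hi⟩
      · rw [hij] at hm
        have hjx : j < x := by
          by_contra h
          push_neg at h
          exact hx (Set.mem_iUnion.2 ⟨m, by rw [hij]; exact ⟨hm.1.trans hax, h⟩⟩)
        refine ⟨j, Set.mem_iUnion.2 ⟨m, by rw [hij]; exact ⟨hm.1.trans hm.2, le_refl j⟩⟩,
          hm.2, hjx, m, by rw [hij]; exact ⟨hm.1.trans hm.2, le_refl j⟩,
          by rw [hij]; exact fun t ht => ht.2⟩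
      · rw [hi] at hm
        exact absurd (Set.mem_iUnion.2 ⟨m, by rw [hi]; exact hm.trans hax⟩) hx
    obtain ⟨b, hbE, hbmax⟩ := Set.exists_max_image E id hEfin hEne
    obtain ⟨hbA, habb, hbx, -⟩ := hbE
    have hbr : b ∈ rSet (⋃ m, f m) := by
      refine ⟨hbA, x, hbx, ?_⟩
      ext t
      simp only [Set.mem_inter_iff, Set.mem_Ioo, Set.mem_empty_iff_false, iff_false, not_and]
      rintro ⟨htb, htx⟩ htA
      obtain ⟨m, htm⟩ := Set.mem_iUnion.1 htA
      rcases hf m with ⟨i, j, hij⟩ | ⟨i, hi⟩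
      · rw [hij] at htm
        have hjx : j < x := by
          by_contra h
          push_neg at h
          exact hx (Set.mem_iUnion.2 ⟨m, by rw [hij]; exact ⟨htm.1.trans htx.le, h⟩⟩)
        have hjE : j ∈ E := by
          refine ⟨Set.mem_iUnion.2 ⟨m, by rw [hij]; exact ⟨htm.1.trans htm.2, le_refl j⟩⟩,
            habb.trans (htb.le.trans htm.2), hjx, m,
            by rw [hij]; exact ⟨htm.1.trans htm.2, le_refl j⟩,
            by rw [hij]; exact fun t' ht' => ht'.2⟩
        have := hbmax j hjE
        simp only [id] at this
        exact absurd (htm.2.trans this) (not_le.2 htb)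
      · rw [hi] at htm
        exact hx (Set.mem_iUnion.2 ⟨m, by rw [hi]; exact htm.trans htx.le⟩)
    exact hnb b hbr ⟨habb, hbx⟩

/-! ### Singleton characterizations -/

lemma minSet_singleton (i : II) : minSet ({i} : Set II) = {i} := by
  ext j
  simp only [minSet, Set.mem_setOf_eq, Set.mem_singleton_iff]
  constructor
  · exact fun h => h.1
  · rintro rfl
    exact ⟨rfl, fun k hk => by rw [hk]⟩

lemma singChar (S : Set II) : (minSet S = S ∧ ¬S = ∅) ↔ ∃ i, S = {i} := by
  constructor
  · rintro ⟨hmin, hne⟩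
    have hsub : S.Subsingleton := hmin ▸ minSet_subsingleton S
    rcases hsub.eq_empty_or_singleton with h | h
    · exact absurd h hne
    · exact h
  · rintro ⟨i, rfl⟩
    exact ⟨minSet_singleton i, by simp⟩

lemma maxSet_pair (i j : II) : maxSet ({i} ∪ {j} : Set II) = {i ⊔ j} := by
  ext t
  simp only [maxSet, Set.mem_union, Set.mem_singleton_iff, Set.mem_setOf_eq]
  constructor
  · rintro ⟨h1, h2⟩
    have h2i : i ≤ t := h2 i (Or.inl rfl)
    have h2j : j ≤ t := h2 j (Or.inr rfl)
    rcases h1 with rfl | rfl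
    · exact (sup_eq_left.2 h2j).symm
    · exact (sup_eq_right.2 h2i).symm
  · rintro rfl
    refine ⟨?_, ?_⟩
    · rcases le_total i j with h | h
      · exact Or.inr (sup_eq_right.2 h)
      · exact Or.inl (sup_eq_left.2 h)
    · rintro y (rfl | rfl)
      · exact le_sup_left
      · exact le_sup_right

lemma le_char (i j : II) : maxSet ({i} ∪ {j} : Set II) = {j} ↔ i ≤ j := by
  rw [maxSet_pair, Set.singleton_eq_singleton_iff, sup_eq_right]

/-! ### The formula φ_⊆ -/

/-- Terms over `L_WSO` with four free variables and `n` bound variables. -/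
abbrev Tm (n : ℕ) := LWSO.Term (Fin 4 ⊕ Fin n)

def tUn {n : ℕ} (t s : Tm n) : Tm n := Term.func (WSOFunc.union : LWSO.Functions 2) ![t, s]
def tIn {n : ℕ} (t s : Tm n) : Tm n := Term.func (WSOFunc.inter : LWSO.Functions 2) ![t, s]
def tMi {n : ℕ} (t : Tm n) : Tm n := Term.func (WSOFunc.min : LWSO.Functions 1) ![t]
def tMa {n : ℕ} (t : Tm n) : Tm n := Term.func (WSOFunc.max : LWSO.Functions 1) ![t]
def tBo {n : ℕ} : Tm n := Term.func (WSOFunc.bot : LWSO.Functions 0) ![]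

lemma realize_tUn {n : ℕ} (t s : Tm n) (v : Fin 4 ⊕ Fin n → FinSub) :
    ((tUn t s).realize v).1 = (t.realize v).1 ∪ (s.realize v).1 := rfl
lemma realize_tIn {n : ℕ} (t s : Tm n) (v : Fin 4 ⊕ Fin n → FinSub) :
    ((tIn t s).realize v).1 = (t.realize v).1 ∩ (s.realize v).1 := rfl
lemma realize_tMi {n : ℕ} (t : Tm n) (v : Fin 4 ⊕ Fin n → FinSub) :
    ((tMi t).realize v).1 = minSet (t.realize v).1 := rfl
lemma realize_tMa {n : ℕ} (t : Tm n) (v : Fin 4 ⊕ Fin n → FinSub) :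
    ((tMa t).realize v).1 = maxSet (t.realize v).1 := rfl
lemma realize_tBo {n : ℕ} (v : Fin 4 ⊕ Fin n → FinSub) :
    ((tBo (n := n)).realize v).1 = (∅ : Set II) := rfl

/-- "t is a singleton". -/
def fSing {n : ℕ} (t : Tm n) : LWSO.BoundedFormula (Fin 4) n :=
  Term.bdEqual (tMi t) t ⊓ ∼(Term.bdEqual t tBo)

/-- "t ⊆ s" (as t ∩ s = t). -/
def fMemS {n : ℕ} (t s : Tm n) : LWSO.BoundedFormula (Fin 4) n :=
  Term.bdEqual (tIn t s) t

/-- "t ≤ s" for singletons (as max(t ∪ s) = s). -/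
def fLe {n : ℕ} (t s : Tm n) : LWSO.BoundedFormula (Fin 4) n :=
  Term.bdEqual (tMa (tUn t s)) s

lemma realize_fSing {n : ℕ} (t : Tm n) (v : Fin 4 → FinSub) (xs : Fin n → FinSub) :
    (fSing t).Realize v xs ↔ ∃ i, (t.realize (Sum.elim v xs)).1 = {i} := by
  rw [fSing]
  simp only [BoundedFormula.realize_inf, BoundedFormula.realize_not,
    BoundedFormula.realize_bdEqual, Subtype.ext_iff, realize_tMi, realize_tBo]
  exact singChar _

lemma realize_fMemS {n : ℕ} (t s : Tm n) (v : Fin 4 → FinSub) (xs : Fin n → FinSub) :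
    (fMemS t s).Realize v xs ↔
      (t.realize (Sum.elim v xs)).1 ⊆ (s.realize (Sum.elim v xs)).1 := by
  rw [fMemS]
  simp only [BoundedFormula.realize_bdEqual, Subtype.ext_iff, realize_tIn]
  exact Set.inter_eq_left

lemma realize_fLe {n : ℕ} (t s : Tm n) (v : Fin 4 → FinSub) (xs : Fin n → FinSub) :
    (fLe t s).Realize v xs ↔
      maxSet ((t.realize (Sum.elim v xs)).1 ∪ (s.realize (Sum.elim v xs)).1) =
        (s.realize (Sum.elim v xs)).1 := by
  rw [fLe]
  simp only [BoundedFormula.realize_bdEqual, Subtype.ext_iff, realize_tMa, realize_tUn]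

/-- "X (= &0) belongs to the f.c.i. set with left endpoints L and right endpoints R". -/
def fMem (L R : Fin 4) : LWSO.BoundedFormula (Fin 4) 1 :=
  ((fSing &1 ⊓ fMemS &1 (Term.var (Sum.inl L)) ⊓ fLe &1 &0) ⊓
    ∀' ∼(fSing &2 ⊓ fMemS &2 (Term.var (Sum.inl R)) ⊓ fLe &1 &2 ⊓ ∼(fLe &0 &2))).ex

def phiSub : LWSO.Formula (Fin 4) :=
  ∀' ((fSing &0 ⊓ fMem 0 1) ⟹ fMem 2 3)

lemma realize_fMem (L R : Fin 4) (v : Fin 4 → FinSub) (x : II) (X : FinSub)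
    (hX : X.1 = {x}) :
    (fMem L R).Realize v (fun _ => X) ↔
      ∃ a ∈ (v L).1, a ≤ x ∧ ∀ b ∈ (v R).1, ¬(a ≤ b ∧ b < x) := by
  rw [fMem, BoundedFormula.realize_ex]
  constructor
  · rintro ⟨a, ha⟩
    rw [BoundedFormula.realize_inf, BoundedFormula.realize_inf,
      BoundedFormula.realize_inf] at ha
    obtain ⟨⟨⟨h1, h2⟩, h3⟩, h4⟩ := ha
    rw [realize_fSing] at h1
    obtain ⟨i, hi⟩ := h1
    have hi' : a.1 = {i} := hi
    rw [realize_fMemS] at h2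
    rw [realize_fLe] at h3
    have h2' : ({i} : Set II) ⊆ (v L).1 := hi' ▸ h2
    have h3' : maxSet (({i} : Set II) ∪ {x}) = {x} := by
      have h3'' : maxSet (a.1 ∪ X.1) = X.1 := h3
      rwa [hi', hX] at h3''
    refine ⟨i, h2' rfl, (le_char i x).1 h3', ?_⟩
    rintro b hb ⟨hib, hbx⟩
    rw [BoundedFormula.realize_all] at h4
    have h5 := h4 ⟨{b}, Set.finite_singleton b⟩
    rw [BoundedFormula.realize_not, BoundedFormula.realize_inf,
      BoundedFormula.realize_inf, BoundedFormula.realize_inf] at h5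
    refine h5 ⟨⟨⟨?_, ?_⟩, ?_⟩, ?_⟩
    · rw [realize_fSing]; exact ⟨b, rfl⟩
    · rw [realize_fMemS]
      exact fun y hy => by
        have : y = b := hy
        exact this ▸ hb
    · rw [realize_fLe]
      show maxSet (a.1 ∪ ({b} : Set II)) = ({b} : Set II)
      rw [hi']
      exact (le_char i b).2 hib
    · rw [BoundedFormula.realize_not, realize_fLe]
      show ¬maxSet (X.1 ∪ ({b} : Set II)) = ({b} : Set II)
      rw [hX, le_char]
      exact not_le.2 hbx
  · rintro ⟨i, hiL, hix, hnb⟩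
    refine ⟨⟨{i}, Set.finite_singleton i⟩, ?_⟩
    rw [BoundedFormula.realize_inf, BoundedFormula.realize_inf,
      BoundedFormula.realize_inf]
    refine ⟨⟨⟨?_, ?_⟩, ?_⟩, ?_⟩
    · rw [realize_fSing]; exact ⟨i, rfl⟩
    · rw [realize_fMemS]
      exact fun y hy => by
        have : y = i := hy
        exact this ▸ hiL
    · rw [realize_fLe]
      show maxSet (({i} : Set II) ∪ X.1) = X.1
      rw [hX]
      exact (le_char i x).2 hix
    · rw [BoundedFormula.realize_all]
      intro b
      rw [BoundedFormula.realize_not, BoundedFormula.realize_inf,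
        BoundedFormula.realize_inf, BoundedFormula.realize_inf]
      rintro ⟨⟨⟨h1, h2⟩, h3⟩, h4⟩
      rw [realize_fSing] at h1
      obtain ⟨j, hj⟩ := h1
      have hj' : b.1 = {j} := hj
      rw [realize_fMemS] at h2
      have hjR : j ∈ (v R).1 := h2 (show j ∈ b.1 from hj' ▸ rfl)
      rw [realize_fLe] at h3
      have h3' : i ≤ j := by
        have h3'' : maxSet (({i} : Set II) ∪ b.1) = b.1 := h3
        rwa [hj', le_char] at h3''
      rw [BoundedFormula.realize_not, realize_fLe] at h4
      have h4' : j < x := by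
        have h4'' : ¬maxSet (X.1 ∪ b.1) = b.1 := h4
        rwa [hX, hj', le_char, not_le] at h4''
      exact hnb j hjR ⟨h3', h4'⟩

lemma realize_phiSub (v : Fin 4 → FinSub) :
    phiSub.Realize v ↔ ∀ x : II,
      (∃ a ∈ (v 0).1, a ≤ x ∧ ∀ b ∈ (v 1).1, ¬(a ≤ b ∧ b < x)) →
      (∃ a ∈ (v 2).1, a ≤ x ∧ ∀ b ∈ (v 3).1, ¬(a ≤ b ∧ b < x)) := by
  rw [phiSub, Formula.Realize, BoundedFormula.realize_all]
  have hsnoc : ∀ (xs : Fin 0 → FinSub) (X : FinSub),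
      (Fin.snoc xs X : Fin 1 → FinSub) = fun _ => X := by
    intro xs X
    funext i
    fin_cases i
    rfl
  constructor
  · intro h x hq
    have hX := h ⟨{x}, Set.finite_singleton x⟩
    rw [hsnoc _, BoundedFormula.realize_imp, BoundedFormula.realize_inf] at hX
    refine (realize_fMem 2 3 v x ⟨{x}, Set.finite_singleton x⟩ rfl).1 (hX ⟨?_, ?_⟩)
    · rw [realize_fSing]; exact ⟨x, rfl⟩
    · exact (realize_fMem 0 1 v x ⟨{x}, Set.finite_singleton x⟩ rfl).2 hq
  · intro h X
    rw [hsnoc _, BoundedFormula.realize_imp, BoundedFormula.realize_inf]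
    rintro ⟨hs, hm⟩
    rw [realize_fSing] at hs
    obtain ⟨x, hx⟩ := hs
    have hx' : X.1 = {x} := hx
    exact (realize_fMem 2 3 v x X hx').2 (h x ((realize_fMem 0 1 v x X hx').1 hm))

universe u v

/-- There exists an `L_WSO`-formula `φ_⊆(X_l, X_r, Y_l, Y_r)` such that for
all `A, B ∈ P_fci(𝕀)`: `A ⊆ B` iff `WSO(𝕀) ⊨ φ_⊆(l(A), r(A), l(B), r(B))`. -/
theorem subset_definable_from_endpoints :
    ∃ φ : LWSO.Formula (Fin 4),
      ∀ (A B : Set II), IsFCI A → IsFCI B →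
        ∀ (hlA : (lSet A).Finite) (hrA : (rSet A).Finite)
          (hlB : (lSet B).Finite) (hrB : (rSet B).Finite),
          (A ⊆ B ↔
            φ.Realize (![⟨lSet A, hlA⟩, ⟨rSet A, hrA⟩, ⟨lSet B, hlB⟩, ⟨rSet B, hrB⟩] : Fin 4 → FinSub)) := by
  refine ⟨phiSub, ?_⟩
  intro A B hA hB hlA hrA hlB hrB
  rw [realize_phiSub]
  constructor
  · intro hAB x hq
    exact (mem_fci_iff hB x).1 (hAB ((mem_fci_iff hA x).2 hq))
  · intro h t ht
    exact (mem_fci_iff hB t).2 (h t ((mem_fci_iff hA t).1 ht))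

end MCpaper
end
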